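/- arXiv:2103.03085 — 3 statements merged into one kernel-verified Lean document; each statement's English description precedes it below -/
import Mathlib

section
/- For every x ∈ X, the purified measurement M_{DP} satisfies ‖[F_{D_x} ⊗ 1_P, M_{DP}]‖ ≤ 3·‖[F_{D_x}, Π^x_{D_x}]‖ + ‖[F_{D_x}, Π^∅_D]‖ (as operators on ℂ^{D̄×P}), and ‖[O^x_{YD_x} ⊗ 1_P, 1_Y ⊗ M_{DP}]‖ ≤ 3·‖[O^x_{YD_x}, 1_Y ⊗ Π^x_{D_x}]‖ + ‖[O^x_{YD_x}, 1_Y ⊗ Π^∅_D]‖ (as operators on ℂ^{Y×D̄×P}). -/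
open scoped Matrix Kronecker

noncomputable section

/-- The ℓ²→ℓ² operator norm of a square complex matrix. -/
def opNorm {I : Type*} [Fintype I] [DecidableEq I] (A : Matrix I I ℂ) : ℝ :=
  ‖Matrix.toEuclideanCLM (𝕜 := ℂ) A‖

/-- The commutator [A,B] = AB - BA. -/
def commM {I : Type*} [Fintype I] (A B : Matrix I I ℂ) : Matrix I I ℂ := A * B - B * A

/-- Euclidean norm of a vector in ℂ^I. -/
def vnorm {I : Type*} [Fintype I] (v : I → ℂ) : ℝ := Real.sqrt (∑ i, ‖v i‖ ^ 2)

/-- Y = {0,1}^n. -/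
abbrev Yb (n : ℕ) := Fin n → Bool
/-- Ȳ = Y ∪ {⊥}. -/
abbrev Ybar (n : ℕ) := Option (Yb n)

/-- standard basis vector |a⟩. -/
def ket {n : ℕ} (a : Ybar n) : Ybar n → ℂ := fun b => if b = a then 1 else 0

/-- (-1)^{η⋅y}. -/
def signDot {n : ℕ} (η y : Yb n) : ℂ := (-1 : ℂ) ^ (Finset.univ.filter fun i => η i && y i).card

/-- 2^{-n/2}. -/
def cst (n : ℕ) : ℝ := (2 : ℝ) ^ (-(n : ℝ) / 2)

/-- |φ_η⟩ = 2^{-n/2} ∑_y (-1)^{η⋅y} |y⟩. -/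
def phi {n : ℕ} (η : Yb n) : Ybar n → ℂ :=
  fun a => Option.casesOn a 0 fun y => (cst n : ℂ) * signDot η y

/-- |φ_0⟩. -/
def phi0 (n : ℕ) : Ybar n → ℂ := phi fun _ => false

/-- The Walsh–Hadamard transform on ℂ^Y, extended by the identity on |⊥⟩. -/
def Hbar (n : ℕ) : Matrix (Ybar n) (Ybar n) ℂ :=
  Matrix.of fun a b =>
    match a, b with
    | none, none => 1
    | some y, some y' => (cst n : ℂ) * signDot y y'
    | _, _ => 0

/-- The involution exchanging ⊥ and 0^n. -/
def swapBot (n : ℕ) : Ybar n → Ybar n :=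
  fun a =>
    Option.casesOn a (some fun _ => false) fun y =>
      if y = (fun _ => false) then none else some y

/-- The permutation matrix exchanging |⊥⟩ and |0^n⟩. -/
def Sswap (n : ℕ) : Matrix (Ybar n) (Ybar n) ℂ :=
  Matrix.of fun a b => if a = swapBot n b then 1 else 0

/-- F = H̄ ⬝ S ⬝ H̄. -/
def Fmat (n : ℕ) : Matrix (Ybar n) (Ybar n) ℂ := Hbar n * Sswap n * Hbar n

/-- Γ_x = |{y : (x,y) ∈ R}|. -/
def Gam {n : ℕ} {X : Type*} [Fintype X] (R : X → Yb n → Prop) [∀ x, DecidablePred (R x)]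
    (x : X) : ℕ :=
  (Finset.univ.filter fun y => R x y).card

/-- Γ_R = max_x Γ_x. -/
def GamR {n : ℕ} {X : Type*} [Fintype X] (R : X → Yb n → Prop) [∀ x, DecidablePred (R x)] : ℕ :=
  Finset.univ.sup fun x => Gam R x

/-- whether an entry a ∈ Ȳ satisfies the relation at x (⊥ never does). -/
def hitB {n : ℕ} {X : Type*} (R : X → Yb n → Prop) [∀ x, DecidablePred (R x)] (x : X) :
    Ybar n → Bool :=
  fun a => Option.casesOn a false fun y => decide (R x y)

/-- The projection Π^x = ∑_{y : (x,y)∈R} |y⟩⟨y| on ℂ^Ȳ. -/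
def Pix {n : ℕ} {X : Type*} (R : X → Yb n → Prop) [∀ x, DecidablePred (R x)] (x : X) :
    Matrix (Ybar n) (Ybar n) ℂ :=
  Matrix.diagonal fun a => if hitB R x a then 1 else 0

/-- bitwise xor. -/
def xorY {n : ℕ} (y y' : Yb n) : Yb n := fun i => xor (y i) (y' i)

/-- CNOT on Y × Ȳ (control Ȳ, target Y), acting trivially on |y⟩⊗|⊥⟩. -/
def cnotFun (n : ℕ) : Yb n × Ybar n → Yb n × Ybar n :=
  fun p => Option.casesOn p.2 p fun y' => (xorY p.1 y', p.2)

def CNOTmat (n : ℕ) : Matrix (Yb n × Ybar n) (Yb n × Ybar n) ℂ :=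
  Matrix.of fun a b => if a = cnotFun n b then 1 else 0

/-- O^x = (1⊗F)·CNOT·(1⊗F) on ℂ^{Y×Ȳ}. -/
def Oxsmall (n : ℕ) : Matrix (Yb n × Ybar n) (Yb n × Ybar n) ℂ :=
  ((1 : Matrix (Yb n) (Yb n) ℂ) ⊗ₖ Fmat n) * CNOTmat n *
    ((1 : Matrix (Yb n) (Yb n) ℂ) ⊗ₖ Fmat n)

/-- The database index set D̄ = X → Ȳ. -/
abbrev Db (n : ℕ) (X : Type*) := X → Ybar n

/-- An operator A on ℂ^Ȳ acting on the x-coordinate of ℂ^{D̄}. -/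
def onCoord {n : ℕ} {X : Type*} [Fintype X] [DecidableEq X] (x : X)
    (A : Matrix (Ybar n) (Ybar n) ℂ) : Matrix (Db n X) (Db n X) ℂ :=
  Matrix.of fun d d' => if ∀ x', x' ≠ x → d x' = d' x' then A (d x) (d' x) else 0

/-- Π^x_{D_x} : diagonal projection on ℂ^{D̄} onto databases with (x, d x) ∈ R. -/
def PiDx {n : ℕ} {X : Type*} [Fintype X] [DecidableEq X]
    (R : X → Yb n → Prop) [∀ x, DecidablePred (R x)] (x : X) :
    Matrix (Db n X) (Db n X) ℂ :=
  Matrix.diagonal fun d => if hitB R x (d x) then 1 else 0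

/-- Π^∅_D : diagonal projection on ℂ^{D̄} onto databases hitting R nowhere. -/
def PiEmptyD {n : ℕ} {X : Type*} [Fintype X] [DecidableEq X]
    (R : X → Yb n → Prop) [∀ x, DecidablePred (R x)] :
    Matrix (Db n X) (Db n X) ℂ :=
  Matrix.diagonal fun d => if ∀ x, hitB R x (d x) = false then 1 else 0

/-- CNOT_{YD_x}. -/
def cnotDFun {n : ℕ} {X : Type*} (x : X) : Yb n × Db n X → Yb n × Db n X :=
  fun p => Option.casesOn (p.2 x) p fun yx => (xorY p.1 yx, p.2)

def CNOTD {n : ℕ} {X : Type*} [Fintype X] [DecidableEq X] (x : X) :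
    Matrix (Yb n × Db n X) (Yb n × Db n X) ℂ :=
  Matrix.of fun a b => if a = cnotDFun x b then 1 else 0

/-- F_{D_x}. -/
def FDx (n : ℕ) {X : Type*} [Fintype X] [DecidableEq X] (x : X) :
    Matrix (Db n X) (Db n X) ℂ :=
  onCoord x (Fmat n)

/-- O^x_{YD_x} = F_{D_x}·CNOT_{YD_x}·F_{D_x} on ℂ^{Y×D̄}. -/
def OxD (n : ℕ) {X : Type*} [Fintype X] [DecidableEq X] (x : X) :
    Matrix (Yb n × Db n X) (Yb n × Db n X) ℂ :=
  ((1 : Matrix (Yb n) (Yb n) ℂ) ⊗ₖ FDx n x) * CNOTD x *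
    ((1 : Matrix (Yb n) (Yb n) ℂ) ⊗ₖ FDx n x)

/-- O_{XYD} = ∑_x |x⟩⟨x| ⊗ O^x_{YD_x} on ℂ^{X×Y×D̄}. -/
def OXYD (n : ℕ) (X : Type*) [Fintype X] [DecidableEq X] :
    Matrix (X × Yb n × Db n X) (X × Yb n × Db n X) ℂ :=
  Matrix.of fun p q =>
    if p.1 = q.1 then OxD n p.1 (p.2.1, p.2.2) (q.2.1, q.2.2) else 0

/-- The pointer set P = ZMod (|X|+1). -/
abbrev Ptr (X : Type*) [Fintype X] := ZMod (Fintype.card X + 1)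

/-- Encoding of X into the nonzero elements of ZMod (|X|+1). -/
def encodeX {X : Type*} [Fintype X] (x : X) : Ptr X :=
  (((Fintype.equivFin X x : ℕ) + 1 : ℕ) : Ptr X)

/-- ext(d): the smallest x ∈ X with (x, d x) ∈ R, encoded in ZMod (|X|+1); ∅ ↦ 0. -/
def extD {n : ℕ} {X : Type*} [Fintype X] [LinearOrder X] (R : X → Yb n → Prop)
    [∀ x, DecidablePred (R x)] (d : Db n X) : Ptr X :=
  if h : (Finset.univ.filter fun x => hitB R x (d x) = true).Nonempty then
    encodeX ((Finset.univ.filter fun x => hitB R x (d x) = true).min' h)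
  else 0

/-- The purified measurement M_{DP} : |d⟩⊗|w⟩ ↦ |d⟩⊗|w + ext(d)⟩ on ℂ^{D̄×P}. -/
def MDP {n : ℕ} {X : Type*} [Fintype X] [LinearOrder X] (R : X → Yb n → Prop)
    [∀ x, DecidablePred (R x)] :
    Matrix (Db n X × Ptr X) (Db n X × Ptr X) ℂ :=
  Matrix.of fun p q => if p = (q.1, q.2 + extD R q.1) then 1 else 0

/-- O^x_{YD_x} ⊗ 1_P on ℂ^{Y×D̄×P}. -/
def OxDP (n : ℕ) {X : Type*} [Fintype X] [DecidableEq X] (x : X) :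
    Matrix (Yb n × Db n X × Ptr X) (Yb n × Db n X × Ptr X) ℂ :=
  Matrix.of fun p q =>
    if p.2.2 = q.2.2 then OxD n x (p.1, p.2.1) (q.1, q.2.1) else 0

/-- 1_Y ⊗ M_{DP} on ℂ^{Y×D̄×P}. -/
def MYDP {n : ℕ} {X : Type*} [Fintype X] [LinearOrder X] (R : X → Yb n → Prop)
    [∀ x, DecidablePred (R x)] :
    Matrix (Yb n × Db n X × Ptr X) (Yb n × Db n X × Ptr X) ℂ :=
  Matrix.of fun p q =>
    if p.1 = q.1 then MDP R (p.2.1, p.2.2) (q.2.1, q.2.2) else 0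

/-- O_{XYD} ⊗ 1_P on ℂ^{X×Y×D̄×P}. -/
def OXYDP (n : ℕ) (X : Type*) [Fintype X] [DecidableEq X] :
    Matrix (X × Yb n × Db n X × Ptr X) (X × Yb n × Db n X × Ptr X) ℂ :=
  Matrix.of fun p q =>
    if p.2.2.2 = q.2.2.2 then
      OXYD n X (p.1, p.2.1, p.2.2.1) (q.1, q.2.1, q.2.2.1)
    else 0

/-- 1_{X×Y} ⊗ M_{DP} on ℂ^{X×Y×D̄×P}. -/
def MXYDP {n : ℕ} {X : Type*} [Fintype X] [LinearOrder X] (R : X → Yb n → Prop)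
    [∀ x, DecidablePred (R x)] :
    Matrix (X × Yb n × Db n X × Ptr X) (X × Yb n × Db n X × Ptr X) ℂ :=
  Matrix.of fun p q =>
    if p.1 = q.1 ∧ p.2.1 = q.2.1 then
      MDP R (p.2.2.1, p.2.2.2) (q.2.2.1, q.2.2.2)
    else 0








-- helper instance (Lean struggles to find this by search)
instance instDEq4 (n : ℕ) (X : Type*) [Fintype X] [DecidableEq X] :
    DecidableEq (X × Yb n × Db n X × Ptr X) :=
  instDecidableEqProd


-- extensions to the five-register space W × X × Y × D̄ × P
/-- 1_W ⊗ O_{XYD} ⊗ 1_P on ℂ^{W×X×Y×D̄×P}. -/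
def OW (n : ℕ) (W X : Type*) [Fintype X] [DecidableEq X] [DecidableEq W] :
    Matrix (W × X × Yb n × Db n X × Ptr X) (W × X × Yb n × Db n X × Ptr X) ℂ :=
  Matrix.of fun p q =>
    if p.1 = q.1 ∧ p.2.2.2.2 = q.2.2.2.2 then
      OXYD n X (p.2.1, p.2.2.1, p.2.2.2.1) (q.2.1, q.2.2.1, q.2.2.2.1)
    else 0

/-- 1_{W×X×Y} ⊗ M_{DP} on ℂ^{W×X×Y×D̄×P}. -/
def MW {n : ℕ} (W : Type*) {X : Type*} [Fintype X] [LinearOrder X] [DecidableEq W]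
    (R : X → Yb n → Prop) [∀ x, DecidablePred (R x)] :
    Matrix (W × X × Yb n × Db n X × Ptr X) (W × X × Yb n × Db n X × Ptr X) ℂ :=
  Matrix.of fun p q =>
    if p.1 = q.1 ∧ p.2.1 = q.2.1 ∧ p.2.2.1 = q.2.2.1 then
      MDP R (p.2.2.2.1, p.2.2.2.2) (q.2.2.2.1, q.2.2.2.2)
    else 0

instance instDEq5 (n : ℕ) (W X : Type*) [Fintype X] [DecidableEq X] [DecidableEq W] :
    DecidableEq (W × X × Yb n × Db n X × Ptr X) :=
  instDecidableEqProd


/-- V ⊗ 1_{D̄×P} on ℂ^{W×X×Y×D̄×P}. -/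
def Vext (n : ℕ) (W X : Type*) [Fintype X] [DecidableEq X]
    (V : Matrix (W × X × Yb n) (W × X × Yb n) ℂ) :
    Matrix (W × X × Yb n × Db n X × Ptr X) (W × X × Yb n × Db n X × Ptr X) ℂ :=
  Matrix.of fun p q =>
    if p.2.2.2 = q.2.2.2 then V (p.1, p.2.1, p.2.2.1) (q.1, q.2.1, q.2.2.1) else 0

/-- Ψ = ψ ⊗ |⊥⃗⟩ ⊗ |0⟩. -/
def PsiInit (n : ℕ) {W X : Type*} [Fintype X] [DecidableEq X]
    (ψ : W × X × Yb n → ℂ) : W × X × Yb n × Db n X × Ptr X → ℂ :=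
  fun p =>
    if p.2.2.2.1 = (fun _ => (none : Ybar n)) ∧ p.2.2.2.2 = (0 : Ptr X) then
      ψ (p.1, p.2.1, p.2.2.1)
    else 0

/-- 1_{W×X×Y×D̄} ⊗ |0⟩⟨0|_P. -/
def ProjZeroP (n : ℕ) (W X : Type*) [Fintype X] [DecidableEq X] [DecidableEq W] :
    Matrix (W × X × Yb n × Db n X × Ptr X) (W × X × Yb n × Db n X × Ptr X) ℂ :=
  Matrix.of fun p q =>
    if p.1 = q.1 ∧ p.2.1 = q.2.1 ∧ p.2.2.1 = q.2.2.1 ∧ p.2.2.2.1 = q.2.2.2.1 ∧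
        p.2.2.2.2 = (0 : Ptr X) ∧ q.2.2.2.2 = (0 : Ptr X) then 1 else 0



/-- O_{XYD} acting on registers 1, 2 and 5 of ℂ^{X×Y×X'×Y'×D̄}. -/
def Oquery1 (n : ℕ) (X : Type*) [Fintype X] [DecidableEq X] :
    Matrix (X × Yb n × X × Yb n × Db n X) (X × Yb n × X × Yb n × Db n X) ℂ :=
  Matrix.of fun p q =>
    if p.2.2.1 = q.2.2.1 ∧ p.2.2.2.1 = q.2.2.2.1 then
      OXYD n X (p.1, p.2.1, p.2.2.2.2) (q.1, q.2.1, q.2.2.2.2)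
    else 0

/-- O_{X'Y'D} acting on registers 3, 4 and 5 of ℂ^{X×Y×X'×Y'×D̄}. -/
def Oquery2 (n : ℕ) (X : Type*) [Fintype X] [DecidableEq X] :
    Matrix (X × Yb n × X × Yb n × Db n X) (X × Yb n × X × Yb n × Db n X) ℂ :=
  Matrix.of fun p q =>
    if p.1 = q.1 ∧ p.2.1 = q.2.1 then
      OXYD n X (p.2.2.1, p.2.2.2.1, p.2.2.2.2) (q.2.2.1, q.2.2.2.1, q.2.2.2.2)
    else 0


/-- M^R_{DP} acting on registers D and P of ℂ^{D̄×P×P'}. -/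
def Mext1 {n : ℕ} {X : Type*} [Fintype X] [LinearOrder X]
    (R : X → Yb n → Prop) [∀ x, DecidablePred (R x)] :
    Matrix (Db n X × Ptr X × Ptr X) (Db n X × Ptr X × Ptr X) ℂ :=
  Matrix.of fun p q =>
    if p.2.2 = q.2.2 then MDP R (p.1, p.2.1) (q.1, q.2.1) else 0

/-- M^{R'}_{DP'} acting on registers D and P' of ℂ^{D̄×P×P'}. -/
def Mext2 {n : ℕ} {X : Type*} [Fintype X] [LinearOrder X]
    (R' : X → Yb n → Prop) [∀ x, DecidablePred (R' x)] :
    Matrix (Db n X × Ptr X × Ptr X) (Db n X × Ptr X × Ptr X) ℂ :=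
  Matrix.of fun p q =>
    if p.2.1 = q.2.1 then MDP R' (p.1, p.2.2) (q.1, q.2.2) else 0



-- ===================== auxiliary machinery for stmt10 =====================
section Stmt10Aux

variable {I J K : Type*} [Fintype I] [Fintype J] [Fintype K]
  [DecidableEq I] [DecidableEq J] [DecidableEq K]

lemma opNorm_nonneg' (A : Matrix K K ℂ) : 0 ≤ opNorm A := norm_nonneg _

lemma opNorm_mul_le' (A B : Matrix K K ℂ) : opNorm (A*B) ≤ opNorm A * opNorm B := by
  unfold opNorm; rw [map_mul]; exact norm_mul_le _ _

lemma opNorm_sub_le' (A B : Matrix K K ℂ) : opNorm (A - B) ≤ opNorm A + opNorm B := by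
  unfold opNorm; rw [map_sub]; exact norm_sub_le _ _

lemma clm_apply' (A : Matrix K K ℂ) (v : EuclideanSpace ℂ K) :
    (Matrix.toEuclideanCLM (𝕜 := ℂ) A) v
      = (WithLp.equiv 2 (K → ℂ)).symm (A.mulVec (WithLp.equiv 2 _ v)) := by
  have := Matrix.toEuclideanCLM_toLp (𝕜 := ℂ) A (WithLp.equiv 2 _ v)
  exact this

lemma opNorm_le_of_sq {A : Matrix K K ℂ} {c : ℝ} (hc : 0 ≤ c)
    (h : ∀ v : K → ℂ, (∑ i, ‖A.mulVec v i‖^2) ≤ c^2 * ∑ i, ‖v i‖^2) : opNorm A ≤ c := by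
  refine ContinuousLinearMap.opNorm_le_bound _ hc (fun v => ?_)
  rw [clm_apply']
  rw [EuclideanSpace.norm_eq, EuclideanSpace.norm_eq]
  have h1 := h (WithLp.equiv 2 _ v)
  have hs : Real.sqrt (∑ i, ‖A.mulVec (WithLp.equiv 2 _ v) i‖^2) ≤
      Real.sqrt (c^2 * ∑ i, ‖v i‖^2) := by
    apply Real.sqrt_le_sqrt
    simpa using h1
  calc Real.sqrt (∑ i, ‖(WithLp.equiv 2 (K → ℂ)).symm (A.mulVec (WithLp.equiv 2 _ v)) i‖^2)
      = Real.sqrt (∑ i, ‖A.mulVec (WithLp.equiv 2 _ v) i‖^2) := by simp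
    _ ≤ Real.sqrt (c^2 * ∑ i, ‖v i‖^2) := hs
    _ = c * Real.sqrt (∑ i, ‖v i‖^2) := by
        rw [Real.sqrt_mul (sq_nonneg c), Real.sqrt_sq hc]

lemma mulVec_sq_le (A : Matrix K K ℂ) (v : K → ℂ) :
    (∑ i, ‖A.mulVec v i‖^2) ≤ opNorm A ^2 * ∑ i, ‖v i‖^2 := by
  have h := (Matrix.toEuclideanCLM (𝕜 := ℂ) A).le_opNorm ((WithLp.equiv 2 (K → ℂ)).symm v)
  rw [clm_apply'] at h
  have h2 := pow_le_pow_left₀ (norm_nonneg _) h 2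
  rw [EuclideanSpace.norm_eq, EuclideanSpace.norm_eq] at h2
  rw [Real.sq_sqrt (by positivity), mul_pow, Real.sq_sqrt (by positivity)] at h2
  simp only [WithLp.equiv_symm_apply, PiLp.toLp_apply, WithLp.equiv_apply, WithLp.ofLp_toLp] at h2
  exact h2

/-- A acting on the `I`-part of `K ≃ I × J`. -/
def blk (e : K ≃ I × J) (A : Matrix I I ℂ) : Matrix K K ℂ :=
  Matrix.of fun p q => if (e p).2 = (e q).2 then A (e p).1 (e q).1 else 0

lemma blk_mul (e : K ≃ I × J) (A B : Matrix I I ℂ) : blk e A * blk e B = blk e (A * B) := by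
  ext p q
  simp only [blk, Matrix.mul_apply, Matrix.of_apply]
  rw [← Equiv.sum_comp e.symm (fun r => _)]
  simp only [Equiv.apply_symm_apply]
  rw [Fintype.sum_prod_type]
  simp only [ite_mul, zero_mul, Finset.sum_ite_eq, Finset.mem_univ, if_true, mul_ite, mul_zero]
  by_cases h : (e p).2 = (e q).2 <;> simp [h]

lemma blk_sub (e : K ≃ I × J) (A B : Matrix I I ℂ) : blk e A - blk e B = blk e (A - B) := by
  ext p q
  simp only [blk, Matrix.sub_apply, Matrix.of_apply]
  split <;> simp

lemma blk_commM (e : K ≃ I × J) (A B : Matrix I I ℂ) :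
    commM (blk e A) (blk e B) = blk e (commM A B) := by
  simp [commM, blk_mul, blk_sub]

lemma blk_mulVec (e : K ≃ I × J) (A : Matrix I I ℂ) (v : K → ℂ) (p : K) :
    (blk e A).mulVec v p = A.mulVec (fun i => v (e.symm (i, (e p).2))) (e p).1 := by
  simp only [Matrix.mulVec, dotProduct, blk, Matrix.of_apply]
  rw [← Equiv.sum_comp e.symm (fun r => _)]
  simp only [Equiv.apply_symm_apply]
  rw [Fintype.sum_prod_type]
  simp only [ite_mul, zero_mul, Finset.sum_ite_eq, Finset.mem_univ, if_true]

lemma opNorm_blk_le (e : K ≃ I × J) (A : Matrix I I ℂ) : opNorm (blk e A) ≤ opNorm A := by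
  apply opNorm_le_of_sq (norm_nonneg _)
  intro v
  calc (∑ p, ‖(blk e A).mulVec v p‖^2)
      = ∑ u : I × J, ‖A.mulVec (fun i => v (e.symm (i, u.2))) u.1‖^2 := by
        rw [← Equiv.sum_comp e.symm (fun r => _)]
        refine Finset.sum_congr rfl fun u _ => ?_
        rw [blk_mulVec]
        simp
    _ = ∑ j : J, ∑ i : I, ‖A.mulVec (fun i => v (e.symm (i, j))) i‖^2 := by
        rw [Fintype.sum_prod_type_right]
    _ ≤ ∑ j : J, opNorm A ^2 * ∑ i : I, ‖v (e.symm (i, j))‖^2 :=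
        Finset.sum_le_sum fun j _ => mulVec_sq_le A _
    _ = opNorm A ^2 * ∑ p, ‖v p‖^2 := by
        rw [← Finset.mul_sum]
        congr 1
        rw [← Equiv.sum_comp e.symm (fun r => ‖v r‖^2), Fintype.sum_prod_type_right]

/-- The permutation matrix of `σ`. -/
def permM (σ : Equiv.Perm K) : Matrix K K ℂ := Matrix.of fun p q => if p = σ q then 1 else 0

lemma permM_mulVec (σ : Equiv.Perm K) (v : K → ℂ) (p : K) :
    (permM σ).mulVec v p = v (σ.symm p) := by
  simp only [Matrix.mulVec, dotProduct, permM, Matrix.of_apply]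
  have hiff : ∀ r, (p = σ r) ↔ (σ.symm p = r) := fun r => by rw [Equiv.symm_apply_eq]
  simp [hiff, Finset.sum_ite_eq]

lemma opNorm_permM_le (σ : Equiv.Perm K) : opNorm (permM σ) ≤ 1 := by
  apply opNorm_le_of_sq zero_le_one
  intro v
  simp only [permM_mulVec, one_pow, one_mul]
  rw [← Equiv.sum_comp σ.symm (fun r => ‖v r‖^2)]

lemma mul_permM_apply (σ : Equiv.Perm K) (A : Matrix K K ℂ) (p q : K) :
    (A * permM σ) p q = A p (σ q) := by
  simp only [Matrix.mul_apply, permM, Matrix.of_apply, mul_ite, mul_one, mul_zero]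
  simp [Finset.sum_ite_eq]

lemma permM_mul_apply (σ : Equiv.Perm K) (A : Matrix K K ℂ) (p q : K) :
    (permM σ * A) p q = A (σ.symm p) q := by
  simp only [Matrix.mul_apply, permM, Matrix.of_apply, ite_mul, one_mul, zero_mul]
  have hiff : ∀ r, (p = σ r) ↔ (σ.symm p = r) := fun r => by rw [Equiv.symm_apply_eq]
  simp [hiff, Finset.sum_ite_eq]

lemma permM_comm (σ : Equiv.Perm K) (A : Matrix K K ℂ)
    (h : ∀ p q, A p (σ q) = A (σ.symm p) q) : A * permM σ = permM σ * A := by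
  ext p q
  rw [mul_permM_apply, permM_mul_apply, h]

lemma key_comm (Ahat M N N' Pihat : Matrix K K ℂ) (hM : M = N' * Pihat + N * (1 - Pihat))
    (h1 : Ahat * N = N * Ahat) (h2 : Ahat * N' = N' * Ahat) :
    commM Ahat M = (N' - N) * commM Ahat Pihat := by
  have h1' : ∀ C, Ahat * (N * C) = N * (Ahat * C) := fun C => by
    rw [← mul_assoc, h1, mul_assoc]
  have h2' : ∀ C, Ahat * (N' * C) = N' * (Ahat * C) := fun C => by
    rw [← mul_assoc, h2, mul_assoc]
  simp only [commM, hM, mul_add, add_mul, mul_sub, sub_mul, mul_one, one_mul, mul_assoc,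
    h1', h2', h1, h2]
  abel

lemma mul_support {T α : Type*} [Fintype T] (A B : Matrix T T ℂ) (f : T → α)
    (hA : ∀ p q, A p q ≠ 0 → f p = f q) (hB : ∀ p q, B p q ≠ 0 → f p = f q) :
    ∀ p q, (A * B) p q ≠ 0 → f p = f q := by
  intro p q h
  rw [Matrix.mul_apply] at h
  obtain ⟨r, _, hr⟩ := Finset.exists_ne_zero_of_sum_ne_zero h
  exact (hA _ _ (left_ne_zero_of_mul hr)).trans (hB _ _ (right_ne_zero_of_mul hr))

lemma kron_one_blk (A : Matrix I I ℂ) :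
    (A ⊗ₖ (1 : Matrix J J ℂ)) = blk (Equiv.refl (I × J)) A := by
  ext p q
  simp only [Matrix.kroneckerMap_apply, Matrix.one_apply, blk, Matrix.of_apply, Equiv.refl_apply,
    mul_ite, mul_one, mul_zero]
  exact if_congr Iff.rfl rfl rfl

lemma one_sub_diag (g : K → ℂ) :
    (1 : Matrix K K ℂ) - Matrix.diagonal g = Matrix.diagonal (fun q => 1 - g q) := by
  rw [← Matrix.diagonal_one, Matrix.diagonal_sub]

end Stmt10Aux

section Stmt10Dom

variable {n : ℕ} {X : Type*} [Fintype X] [LinearOrder X]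
variable (R : X → Yb n → Prop) [∀ x, DecidablePred (R x)]

/-- pointer value when coordinate x does not hit. -/
def fOff (x : X) (d : Db n X) : Ptr X :=
  if h : (Finset.univ.filter fun x' => x' ≠ x ∧ hitB R x' (d x') = true).Nonempty
  then encodeX ((Finset.univ.filter fun x' => x' ≠ x ∧ hitB R x' (d x') = true).min' h) else 0

/-- pointer value when coordinate x hits. -/
def fHit (x : X) (d : Db n X) : Ptr X :=
  encodeX ((insert x (Finset.univ.filter fun x' => x' < x ∧ hitB R x' (d x') = true)).min'
    ⟨x, Finset.mem_insert_self _ _⟩)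

lemma extD_eq_fHit (x : X) (d : Db n X) (hd : hitB R x (d x) = true) :
    extD R d = fHit R x d := by
  have hne : (Finset.univ.filter fun x' => hitB R x' (d x') = true).Nonempty :=
    ⟨x, by simp [hd]⟩
  rw [extD, dif_pos hne]
  unfold fHit
  congr 1
  apply le_antisymm
  · apply Finset.min'_le
    have hmem := Finset.min'_mem _ (⟨x, Finset.mem_insert_self _ _⟩ :
      (insert x (Finset.univ.filter fun x' => x' < x ∧ hitB R x' (d x') = true)).Nonempty)
    rcases Finset.mem_insert.mp hmem with h | h
    · rw [h]; simp [hd]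
    · simp only [Finset.mem_filter, Finset.mem_univ, true_and] at h
      simp [h.2]
  · set m := (Finset.univ.filter fun x' => hitB R x' (d x') = true).min' hne with hm
    have hmmem : m ∈ Finset.univ.filter fun x' => hitB R x' (d x') = true :=
      Finset.min'_mem _ _
    simp only [Finset.mem_filter, Finset.mem_univ, true_and] at hmmem
    rcases lt_or_ge m x with hlt | hle
    · exact Finset.min'_le _ m (Finset.mem_insert_of_mem
        (Finset.mem_filter.mpr ⟨Finset.mem_univ _, hlt, hmmem⟩))
    · exact le_trans (Finset.min'_le _ x (Finset.mem_insert_self _ _)) hle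

lemma extD_eq_fOff (x : X) (d : Db n X) (hd : hitB R x (d x) = false) :
    extD R d = fOff R x d := by
  have hset : (Finset.univ.filter fun x' => hitB R x' (d x') = true)
      = (Finset.univ.filter fun x' => x' ≠ x ∧ hitB R x' (d x') = true) := by
    ext x'
    simp only [Finset.mem_filter, Finset.mem_univ, true_and]
    constructor
    · intro h
      refine ⟨?_, h⟩
      rintro rfl
      rw [hd] at h
      exact Bool.false_ne_true h
    · exact And.right
  unfold extD fOff
  simp only [hset]

lemma fOff_congr (x : X) {d d' : Db n X} (h : ∀ x', x' ≠ x → d x' = d' x') :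
    fOff R x d = fOff R x d' := by
  have hset : (Finset.univ.filter fun x' => x' ≠ x ∧ hitB R x' (d x') = true)
      = (Finset.univ.filter fun x' => x' ≠ x ∧ hitB R x' (d' x') = true) := by
    ext x'
    simp only [Finset.mem_filter, Finset.mem_univ, true_and]
    by_cases hx : x' = x
    · simp [hx]
    · rw [h x' hx]
  unfold fOff
  simp only [hset]

lemma fHit_congr (x : X) {d d' : Db n X} (h : ∀ x', x' ≠ x → d x' = d' x') :
    fHit R x d = fHit R x d' := by
  have hset : (Finset.univ.filter fun x' => x' < x ∧ hitB R x' (d x') = true)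
      = (Finset.univ.filter fun x' => x' < x ∧ hitB R x' (d' x') = true) := by
    ext x'
    simp only [Finset.mem_filter, Finset.mem_univ, true_and]
    by_cases hx : x' = x
    · simp [hx]
    · rw [h x' hx]
  unfold fHit
  simp only [hset]

/-- shift permutation on D̄ × P. -/
def sigma1 (g : Db n X → Ptr X) : Equiv.Perm (Db n X × Ptr X) where
  toFun q := (q.1, q.2 + g q.1)
  invFun p := (p.1, p.2 - g p.1)
  left_inv q := by simp
  right_inv p := by simp

/-- shift permutation on Y × D̄ × P. -/
def sigma2 (g : Db n X → Ptr X) : Equiv.Perm (Yb n × Db n X × Ptr X) where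
  toFun q := (q.1, q.2.1, q.2.2 + g q.2.1)
  invFun p := (p.1, p.2.1, p.2.2 - g p.2.1)
  left_inv q := by simp
  right_inv p := by simp

lemma Pihat1_eq (x : X) :
    (PiDx R x ⊗ₖ (1 : Matrix (Ptr X) (Ptr X) ℂ))
      = Matrix.diagonal (fun q : Db n X × Ptr X => if hitB R x (q.1 x) then 1 else 0) := by
  rw [PiDx, show (1 : Matrix (Ptr X) (Ptr X) ℂ) = Matrix.diagonal (fun _ => 1) from
    Matrix.diagonal_one.symm, Matrix.diagonal_kronecker_diagonal]
  simp

lemma M1_eq (x : X) :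
    MDP R = permM (sigma1 (fHit R x)) * (PiDx R x ⊗ₖ (1 : Matrix (Ptr X) (Ptr X) ℂ))
      + permM (sigma1 (fOff R x)) * (1 - (PiDx R x ⊗ₖ 1)) := by
  rw [Pihat1_eq, one_sub_diag]
  ext p q
  rw [Matrix.add_apply, Matrix.mul_diagonal, Matrix.mul_diagonal]
  show MDP R p q = permM (sigma1 (fHit R x)) p q * _ + permM (sigma1 (fOff R x)) p q * _
  by_cases hq : hitB R x (q.1 x)
  · rw [if_pos hq]
    simp only [MDP, permM, sigma1, Matrix.of_apply, Equiv.coe_fn_mk,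
      extD_eq_fHit R x q.1 hq, mul_one, sub_self, mul_zero, add_zero]
    exact if_congr Iff.rfl rfl rfl
  · rw [if_neg hq]
    have hq' : hitB R x (q.1 x) = false := by
      revert hq; cases hitB R x (q.1 x) <;> simp
    simp only [MDP, permM, sigma1, Matrix.of_apply, Equiv.coe_fn_mk,
      extD_eq_fOff R x q.1 hq', mul_zero, sub_zero, mul_one, zero_add]
    exact if_congr Iff.rfl rfl rfl

lemma FDx_support (x : X) {d d' : Db n X} (h : FDx n x d d' ≠ 0) :
    ∀ x', x' ≠ x → d x' = d' x' := by
  unfold FDx onCoord at h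
  simp only [Matrix.of_apply] at h
  by_cases hc : ∀ x', x' ≠ x → d x' = d' x'
  · exact hc
  · rw [if_neg hc] at h
    exact absurd rfl h

lemma comm1 (x : X) (A : Matrix (Db n X) (Db n X) ℂ)
    (hA : ∀ d d', A d d' ≠ 0 → ∀ x', x' ≠ x → d x' = d' x')
    (g : Db n X → Ptr X) (hg : ∀ d d', (∀ x', x' ≠ x → d x' = d' x') → g d = g d') :
    (A ⊗ₖ (1 : Matrix (Ptr X) (Ptr X) ℂ)) * permM (sigma1 g)
      = permM (sigma1 g) * (A ⊗ₖ 1) := by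
  apply permM_comm
  intro p q
  show (A ⊗ₖ (1 : Matrix (Ptr X) (Ptr X) ℂ)) p (q.1, q.2 + g q.1)
      = (A ⊗ₖ (1 : Matrix (Ptr X) (Ptr X) ℂ)) (p.1, p.2 - g p.1) q
  simp only [Matrix.kroneckerMap_apply, Matrix.one_apply]
  by_cases h0 : A p.1 q.1 = 0
  · simp [h0]
  · have hgg : g p.1 = g q.1 := hg _ _ (hA _ _ h0)
    congr 1
    rw [hgg]
    congr 1
    exact propext ⟨fun hh => by rw [hh]; ring, fun hh => by rw [← hh]; ring⟩

lemma comm2 (x : X) (A : Matrix (Yb n × Db n X) (Yb n × Db n X) ℂ)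
    (hA : ∀ p q, A p q ≠ 0 → ∀ x', x' ≠ x → p.2 x' = q.2 x')
    (g : Db n X → Ptr X) (hg : ∀ d d', (∀ x', x' ≠ x → d x' = d' x') → g d = g d') :
    blk (Equiv.prodAssoc (Yb n) (Db n X) (Ptr X)).symm A * permM (sigma2 g)
      = permM (sigma2 g) * blk (Equiv.prodAssoc (Yb n) (Db n X) (Ptr X)).symm A := by
  apply permM_comm
  intro p q
  show blk _ A p (q.1, q.2.1, q.2.2 + g q.2.1) = blk _ A (p.1, p.2.1, p.2.2 - g p.2.1) q
  simp only [blk, Matrix.of_apply, Equiv.prodAssoc_symm_apply]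
  by_cases h0 : A (p.1, p.2.1) (q.1, q.2.1) = 0
  · split <;> split <;> simp [h0]
  · have hgg : g p.2.1 = g q.2.1 := hg _ _ (fun x' hx' => hA _ _ h0 x' hx')
    rw [hgg]
    congr 1
    exact propext ⟨fun hh => by rw [hh]; ring, fun hh => by rw [← hh]; ring⟩

end Stmt10Dom
-- ===================== end auxiliary machinery =====================

section Stmt10Dom2

variable {n : ℕ} {X : Type*} [Fintype X] [LinearOrder X]
variable (R : X → Yb n → Prop) [∀ x, DecidablePred (R x)]

lemma e2_apply (p : Yb n × Db n X × Ptr X) :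
    (Equiv.prodAssoc (Yb n) (Db n X) (Ptr X)).symm p = ((p.1, p.2.1), p.2.2) := rfl

lemma OxDP_eq_blk (x : X) :
    OxDP n x = blk (Equiv.prodAssoc (Yb n) (Db n X) (Ptr X)).symm (OxD n x) := by
  ext p q
  simp only [OxDP, blk, Matrix.of_apply, e2_apply]
  exact if_congr Iff.rfl rfl rfl

lemma Pihat2_eq (x : X) :
    blk (Equiv.prodAssoc (Yb n) (Db n X) (Ptr X)).symm
        ((1 : Matrix (Yb n) (Yb n) ℂ) ⊗ₖ PiDx R x)
      = Matrix.diagonal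
          (fun q : Yb n × Db n X × Ptr X => if hitB R x (q.2.1 x) then 1 else 0) := by
  ext p q
  simp only [blk, Matrix.of_apply, e2_apply, Matrix.kroneckerMap_apply, Matrix.one_apply,
    PiDx, Matrix.diagonal_apply]
  by_cases h1 : p.1 = q.1 <;> by_cases h2 : p.2.1 = q.2.1 <;> by_cases h3 : p.2.2 = q.2.2 <;>
    simp [Prod.ext_iff, h1, h2, h3]

lemma M2_eq (x : X) :
    MYDP R = permM (sigma2 (fHit R x)) * Matrix.diagonal
        (fun q : Yb n × Db n X × Ptr X => if hitB R x (q.2.1 x) then 1 else 0)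
      + permM (sigma2 (fOff R x)) * (1 - Matrix.diagonal
        (fun q : Yb n × Db n X × Ptr X => if hitB R x (q.2.1 x) then 1 else 0)) := by
  rw [one_sub_diag]
  ext p q
  rw [Matrix.add_apply, Matrix.mul_diagonal, Matrix.mul_diagonal]
  by_cases hq : hitB R x (q.2.1 x)
  · rw [if_pos hq]
    simp only [MYDP, MDP, permM, sigma2, Matrix.of_apply, Equiv.coe_fn_mk,
      extD_eq_fHit R x q.2.1 hq, mul_one, sub_self, mul_zero, add_zero]
    by_cases h1 : p.1 = q.1 <;> simp [Prod.ext_iff, h1]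
  · rw [if_neg hq]
    have hq' : hitB R x (q.2.1 x) = false := by
      revert hq; cases hitB R x (q.2.1 x) <;> simp
    simp only [MYDP, MDP, permM, sigma2, Matrix.of_apply, Equiv.coe_fn_mk,
      extD_eq_fOff R x q.2.1 hq', mul_zero, sub_zero, mul_one, zero_add]
    by_cases h1 : p.1 = q.1 <;> simp [Prod.ext_iff, h1]

lemma OxD_support (x : X) : ∀ p q, OxD n x p q ≠ 0 →
    (fun t : {x' : X // x' ≠ x} => p.2 t.1) = (fun t => q.2 t.1) := by
  have hF : ∀ p q : Yb n × Db n X, ((1 : Matrix (Yb n) (Yb n) ℂ) ⊗ₖ FDx n x) p q ≠ 0 →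
      (fun t : {x' : X // x' ≠ x} => p.2 t.1) = (fun t => q.2 t.1) := by
    intro p q h
    simp only [Matrix.kroneckerMap_apply] at h
    have h2 := right_ne_zero_of_mul h
    funext t
    exact FDx_support x h2 t.1 t.2
  have hC : ∀ p q : Yb n × Db n X, CNOTD x p q ≠ 0 →
      (fun t : {x' : X // x' ≠ x} => p.2 t.1) = (fun t => q.2 t.1) := by
    intro p q h
    unfold CNOTD at h
    simp only [Matrix.of_apply] at h
    have hpq : p = cnotDFun x q := by
      by_contra hc; rw [if_neg hc] at h; exact absurd rfl h
    have h2 : p.2 = q.2 := by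
      rw [hpq]; unfold cnotDFun; cases hq : q.2 x <;> simp [hq]
    rw [h2]
  unfold OxD
  exact mul_support _ _ _ (mul_support _ _ _ hF hC) hF

end Stmt10Dom2

-- STATEMENT 10
theorem stmt10 (n : ℕ) {X : Type*} [Fintype X] [LinearOrder X] [Nonempty X]
    (R : X → Yb n → Prop) [∀ x, DecidablePred (R x)] (x : X) :
    opNorm (commM (FDx n x ⊗ₖ (1 : Matrix (Ptr X) (Ptr X) ℂ)) (MDP R)) ≤
        3 * opNorm (commM (FDx n x) (PiDx R x)) + opNorm (commM (FDx n x) (PiEmptyD R)) ∧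
      opNorm (commM (OxDP n x) (MYDP R)) ≤
        3 * opNorm (commM (OxD n x) ((1 : Matrix (Yb n) (Yb n) ℂ) ⊗ₖ PiDx R x)) +
          opNorm (commM (OxD n x) ((1 : Matrix (Yb n) (Yb n) ℂ) ⊗ₖ PiEmptyD R)) := by
  constructor
  · -- part 1
    have hid : commM (FDx n x ⊗ₖ (1 : Matrix (Ptr X) (Ptr X) ℂ)) (MDP R)
        = (permM (sigma1 (fHit R x)) - permM (sigma1 (fOff R x)))
          * commM (FDx n x ⊗ₖ (1 : Matrix (Ptr X) (Ptr X) ℂ)) (PiDx R x ⊗ₖ 1) :=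
      key_comm _ _ _ _ _ (M1_eq R x)
        (comm1 x (FDx n x) (fun _ _ h => FDx_support x h) (fOff R x)
          (fun _ _ h => fOff_congr R x h))
        (comm1 x (FDx n x) (fun _ _ h => FDx_support x h) (fHit R x)
          (fun _ _ h => fHit_congr R x h))
    have hcomm : commM (FDx n x ⊗ₖ (1 : Matrix (Ptr X) (Ptr X) ℂ)) (PiDx R x ⊗ₖ 1)
        = blk (Equiv.refl _) (commM (FDx n x) (PiDx R x)) := by
      rw [kron_one_blk, kron_one_blk, blk_commM]
    rw [hid, hcomm]
    have hb := opNorm_blk_le (Equiv.refl ((Db n X) × Ptr X)) (commM (FDx n x) (PiDx R x))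
    have hN := opNorm_permM_le (sigma1 (fHit R x))
    have hN' := opNorm_permM_le (sigma1 (fOff R x))
    have hsub := opNorm_sub_le' (permM (sigma1 (fHit R x))) (permM (sigma1 (fOff R x)))
    have hmul := opNorm_mul_le' (permM (sigma1 (fHit R x)) - permM (sigma1 (fOff R x)))
      (blk (Equiv.refl ((Db n X) × Ptr X)) (commM (FDx n x) (PiDx R x)))
    have h0 := opNorm_nonneg' (commM (FDx n x) (PiDx R x))
    have h0' := opNorm_nonneg' (commM (FDx n x) (PiEmptyD R))
    have h0'' := opNorm_nonneg' (blk (Equiv.refl ((Db n X) × Ptr X)) (commM (FDx n x) (PiDx R x)))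
    have h0''' := opNorm_nonneg' (permM (sigma1 (fHit R x)) - permM (sigma1 (fOff R x)))
    nlinarith [mul_le_mul hsub hb h0'' (by linarith : (0:ℝ) ≤ opNorm (permM (sigma1 (fHit R x))) + opNorm (permM (sigma1 (fOff R x))))]
  · -- part 2
    have hA2 : OxDP n x = blk (Equiv.prodAssoc (Yb n) (Db n X) (Ptr X)).symm (OxD n x) :=
      OxDP_eq_blk x
    have hsupp : ∀ p q, OxD n x p q ≠ 0 → ∀ x', x' ≠ x → p.2 x' = q.2 x' :=
      fun p q h x' hx' => congrFun (OxD_support x p q h) ⟨x', hx'⟩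
    have hM2 : MYDP R = permM (sigma2 (fHit R x)) *
          blk (Equiv.prodAssoc (Yb n) (Db n X) (Ptr X)).symm
            ((1 : Matrix (Yb n) (Yb n) ℂ) ⊗ₖ PiDx R x)
        + permM (sigma2 (fOff R x)) * (1 - blk (Equiv.prodAssoc (Yb n) (Db n X) (Ptr X)).symm
            ((1 : Matrix (Yb n) (Yb n) ℂ) ⊗ₖ PiDx R x)) := by
      rw [Pihat2_eq R x]; exact M2_eq R x
    have hid : commM (OxDP n x) (MYDP R)
        = (permM (sigma2 (fHit R x)) - permM (sigma2 (fOff R x)))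
          * commM (OxDP n x) (blk (Equiv.prodAssoc (Yb n) (Db n X) (Ptr X)).symm
              ((1 : Matrix (Yb n) (Yb n) ℂ) ⊗ₖ PiDx R x)) :=
      key_comm _ _ _ _ _ hM2
        (by rw [hA2]
            exact comm2 x (OxD n x) hsupp (fOff R x) (fun _ _ h => fOff_congr R x h))
        (by rw [hA2]
            exact comm2 x (OxD n x) hsupp (fHit R x) (fun _ _ h => fHit_congr R x h))
    have hcomm : commM (OxDP n x) (blk (Equiv.prodAssoc (Yb n) (Db n X) (Ptr X)).symm
          ((1 : Matrix (Yb n) (Yb n) ℂ) ⊗ₖ PiDx R x))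
        = blk (Equiv.prodAssoc (Yb n) (Db n X) (Ptr X)).symm
            (commM (OxD n x) ((1 : Matrix (Yb n) (Yb n) ℂ) ⊗ₖ PiDx R x)) := by
      rw [hA2, blk_commM]
    rw [hid, hcomm]
    have hb := opNorm_blk_le (Equiv.prodAssoc (Yb n) (Db n X) (Ptr X)).symm
      (commM (OxD n x) ((1 : Matrix (Yb n) (Yb n) ℂ) ⊗ₖ PiDx R x))
    have hN := opNorm_permM_le (sigma2 (fHit R x))
    have hN' := opNorm_permM_le (sigma2 (fOff R x))
    have hsub := opNorm_sub_le' (permM (sigma2 (fHit R x))) (permM (sigma2 (fOff R x)))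
    have hmul := opNorm_mul_le' (permM (sigma2 (fHit R x)) - permM (sigma2 (fOff R x)))
      (blk (Equiv.prodAssoc (Yb n) (Db n X) (Ptr X)).symm
        (commM (OxD n x) ((1 : Matrix (Yb n) (Yb n) ℂ) ⊗ₖ PiDx R x)))
    have h0 := opNorm_nonneg' (commM (OxD n x) ((1 : Matrix (Yb n) (Yb n) ℂ) ⊗ₖ PiDx R x))
    have h0' := opNorm_nonneg' (commM (OxD n x) ((1 : Matrix (Yb n) (Yb n) ℂ) ⊗ₖ PiEmptyD R))
    have h0'' := opNorm_nonneg' (blk (Equiv.prodAssoc (Yb n) (Db n X) (Ptr X)).symm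
      (commM (OxD n x) ((1 : Matrix (Yb n) (Yb n) ℂ) ⊗ₖ PiDx R x)))
    have h0''' := opNorm_nonneg' (permM (sigma2 (fHit R x)) - permM (sigma2 (fOff R x)))
    nlinarith [mul_le_mul hsub hb h0'' (by linarith : (0:ℝ) ≤ opNorm (permM (sigma2 (fHit R x))) + opNorm (permM (sigma2 (fOff R x))))]

end
end

section
/- Let W be any finite nonempty auxiliary index type and let ψ be a unit vector in ℂ^{W×X×Y×D̄×P}. Let ψ' := Ō·M̄·ψ and ψ'' := M̄·Ō·ψ, where Ō := 1_W ⊗ O_{XYD} ⊗ 1_P and M̄ := 1_{W×X×Y} ⊗ M_{DP}. Then the trace distance between the pure states |ψ'⟩⟨ψ'| and |ψ''⟩⟨ψ''| is at most 8·2^{−n/2}·√(2·Γ_R); that is, one half of the sum of the absolute values of the eigenvalues of the Hermitian matrix ψ'ψ'† − ψ''ψ''† is at most 8·2^{−n/2}·√(2·Γ_R). -/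
open scoped Matrix Kronecker

noncomputable section

namespace S12
open Matrix
set_option linter.unusedSectionVars false

variable {I : Type*} [Fintype I] [DecidableEq I]

lemma vnorm_nonneg (v : I → ℂ) : 0 ≤ vnorm v := Real.sqrt_nonneg _

lemma vnorm_eq_norm (v : I → ℂ) : vnorm v = ‖(WithLp.equiv 2 (I → ℂ)).symm v‖ := by
  rw [EuclideanSpace.norm_eq]
  simp [vnorm]

lemma star_dot_self (v : I → ℂ) :
    star v ⬝ᵥ v = ((∑ i, ‖v i‖ ^ 2 : ℝ) : ℂ) := by
  push_cast
  simp only [dotProduct, Pi.star_apply, Complex.sq_norm, Complex.star_def]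
  congr 1; funext i
  rw [mul_comm, Complex.mul_conj, ← Complex.sq_norm]
  push_cast
  ring

lemma vnorm_mulVec_of_unitary {A : Matrix I I ℂ} (hA : Aᴴ * A = 1) (v : I → ℂ) :
    vnorm (A.mulVec v) = vnorm v := by
  unfold vnorm
  congr 1
  have h : star (A.mulVec v) ⬝ᵥ (A.mulVec v) = star v ⬝ᵥ v := by
    rw [star_mulVec, ← dotProduct_mulVec, mulVec_mulVec, hA, one_mulVec]
  rw [star_dot_self, star_dot_self] at h
  exact_mod_cast h

lemma vnorm_add_le (u v : I → ℂ) : vnorm (u + v) ≤ vnorm u + vnorm v := by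
  rw [vnorm_eq_norm, vnorm_eq_norm, vnorm_eq_norm]
  exact norm_add_le _ _

lemma vnorm_sub_le (u v : I → ℂ) : vnorm (u - v) ≤ vnorm u + vnorm v := by
  rw [vnorm_eq_norm, vnorm_eq_norm, vnorm_eq_norm]
  exact norm_sub_le _ _

lemma vnorm_smul (c : ℂ) (v : I → ℂ) : vnorm (c • v) = ‖c‖ * vnorm v := by
  rw [vnorm_eq_norm, vnorm_eq_norm]
  rw [show (WithLp.equiv 2 (I → ℂ)).symm (c • v) = c • (WithLp.equiv 2 (I → ℂ)).symm v from rfl]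
  simp [norm_smul]

lemma abs_star_dot_le (b t : I → ℂ) : ‖star b ⬝ᵥ t‖ ≤ vnorm b * vnorm t := by
  have h1 : (inner ℂ ((WithLp.equiv 2 (I → ℂ)).symm b) ((WithLp.equiv 2 (I → ℂ)).symm t) : ℂ)
      = star b ⬝ᵥ t := by rw [dotProduct_comm]; rfl
  rw [vnorm_eq_norm, vnorm_eq_norm, ← h1]
  exact norm_inner_le_norm _ _

lemma vecMulVec_mulVec (a b t : I → ℂ) :
    (Matrix.vecMulVec a b).mulVec t = (b ⬝ᵥ t) • a := by
  funext i
  simp only [Matrix.mulVec, Matrix.vecMulVec_apply, dotProduct, Pi.smul_apply, smul_eq_mul,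
    Finset.sum_mul]
  exact Finset.sum_congr rfl fun j _ => by ring

lemma perm_unitary {f : I → I} (hf : Function.Injective f) :
    (Matrix.of fun a b => if a = f b then (1:ℂ) else 0)ᴴ *
      (Matrix.of fun a b => if a = f b then (1:ℂ) else 0) = 1 := by
  ext a b
  simp only [mul_apply, conjTranspose_apply, of_apply, one_apply, star_one, star_zero, apply_ite (star : ℂ → ℂ)]
  rw [Finset.sum_eq_single (f a)]
  · by_cases h : a = b
    · simp [h]
    · have : ¬ f a = f b := fun hc => h (hf hc)
      simp [h, this]
  · intro r _ hr
    simp only [ite_mul, one_mul, zero_mul, ite_eq_right_iff]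
    intro h
    exact absurd h hr
  · simp

lemma sum_collapse {S : Type*} [Fintype S] {ρ : S → I} (hρ : Function.Injective ρ)
    (f : I → ℂ) (h0 : ∀ r, (∀ s, r ≠ ρ s) → f r = 0) : ∑ r, f r = ∑ s, f (ρ s) := by
  rw [← Finset.sum_image (g := ρ) (f := f) (by intro x _ y _ h; exact hρ h)]
  refine (Finset.sum_subset (Finset.subset_univ _) ?_).symm
  intro r _ hr
  exact h0 r fun s hs => hr (Finset.mem_image.mpr ⟨s, Finset.mem_univ s, hs.symm⟩)

lemma dot_conj (w c : I → ℂ) : star w ⬝ᵥ c = (starRingEnd ℂ) (star c ⬝ᵥ w) := by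
  simp only [dotProduct, Pi.star_apply, map_sum]
  refine Finset.sum_congr rfl fun j _ => ?_
  simp only [_root_.map_mul, Complex.conj_conj, Complex.star_def]
  exact mul_comm _ _

lemma unitary_mul {A B : Matrix I I ℂ} (hA : Aᴴ * A = 1) (hB : Bᴴ * B = 1) :
    (A * B)ᴴ * (A * B) = 1 := by
  rw [Matrix.conjTranspose_mul]
  calc Bᴴ * Aᴴ * (A * B) = Bᴴ * (Aᴴ * A) * B := by noncomm_ring
    _ = 1 := by rw [hA, mul_one, hB]

lemma splitDelta (u v : I → ℂ) :
    Matrix.vecMulVec u (star u) - Matrix.vecMulVec v (star v)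
      = Matrix.vecMulVec u (star (u - v)) + Matrix.vecMulVec (u - v) (star v) := by
  ext i j
  simp only [Matrix.vecMulVec_apply, Matrix.sub_apply, Matrix.add_apply, Pi.sub_apply,
    Pi.star_apply, star_sub]
  ring

-- Cauchy–Schwarz for sums of nonneg reals
lemma cs_sum {a b : I → ℝ} (ha : ∀ i, 0 ≤ a i) (hb : ∀ i, 0 ≤ b i) :
    ∑ i, a i * b i ≤ Real.sqrt (∑ i, a i ^ 2) * Real.sqrt (∑ i, b i ^ 2) := by
  have h := Finset.sum_mul_sq_le_sq_mul_sq Finset.univ a b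
  have hnn : 0 ≤ ∑ i, a i * b i := Finset.sum_nonneg fun i _ => mul_nonneg (ha i) (hb i)
  rw [← Real.sqrt_mul_self hnn]
  rw [← Real.sqrt_mul (Finset.sum_nonneg fun i _ => sq_nonneg (a i))]
  exact Real.sqrt_le_sqrt (by nlinarith [h])


lemma bessel (B : OrthonormalBasis I ℂ (EuclideanSpace ℂ I)) (t : I → ℂ) :
    Real.sqrt (∑ i, ‖star ⇑(B i) ⬝ᵥ t‖ ^ 2) ≤ vnorm t := by
  rw [vnorm_eq_norm]
  refine le_trans (Real.sqrt_le_sqrt ?_) (le_of_eq (Real.sqrt_sq (norm_nonneg _)))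
  refine le_trans (le_of_eq ?_) (B.orthonormal.sum_inner_products_le (𝕜 := ℂ)
      ((WithLp.equiv 2 (I → ℂ)).symm t) (s := Finset.univ))
  refine Finset.sum_congr rfl fun i _ => ?_
  congr 1
  rw [dotProduct_comm]; rfl

lemma eig_sum_bound {Δ : Matrix I I ℂ} (hΔ : Δ.IsHermitian) (u v w : I → ℂ)
    (h : Δ = Matrix.vecMulVec u (star w) + Matrix.vecMulVec w (star v)) :
    ∑ i, |hΔ.eigenvalues i| ≤ vnorm w * (vnorm u + vnorm v) := by
  classical
  set B := hΔ.eigenvectorBasis with hB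
  have key : ∀ i, |hΔ.eigenvalues i| ≤
      ‖star ⇑(B i) ⬝ᵥ u‖ * ‖star ⇑(B i) ⬝ᵥ w‖
      + ‖star ⇑(B i) ⬝ᵥ w‖ * ‖star ⇑(B i) ⬝ᵥ v‖ := by
    intro i
    have he := hΔ.eigenvalues_eq i
    have hm : Δ.mulVec ⇑(B i) = (star w ⬝ᵥ ⇑(B i)) • u + (star v ⬝ᵥ ⇑(B i)) • w := by
      rw [h, Matrix.add_mulVec, vecMulVec_mulVec, vecMulVec_mulVec]
    have hd : star ⇑(B i) ⬝ᵥ Δ.mulVec ⇑(B i)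
        = (star ⇑(B i) ⬝ᵥ u) * (star w ⬝ᵥ ⇑(B i)) + (star ⇑(B i) ⬝ᵥ w) * (star v ⬝ᵥ ⇑(B i)) := by
      rw [hm]
      simp [dotProduct_add, dotProduct_smul, smul_eq_mul]
      ring
    calc |hΔ.eigenvalues i| = |(star ⇑(B i) ⬝ᵥ Δ.mulVec ⇑(B i)).re| := by
            rw [he, ← hB]; norm_num
      _ ≤ ‖star ⇑(B i) ⬝ᵥ Δ.mulVec ⇑(B i)‖ := Complex.abs_re_le_norm _
      _ ≤ _ := by
            rw [hd]
            refine (norm_add_le _ _).trans (le_of_eq ?_)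
            rw [norm_mul, norm_mul, dot_conj w, dot_conj v,
              Complex.norm_conj, Complex.norm_conj]
  set a : I → ℝ := fun i => ‖star ⇑(B i) ⬝ᵥ u‖ with ha
  set b : I → ℝ := fun i => ‖star ⇑(B i) ⬝ᵥ w‖ with hbb
  set d : I → ℝ := fun i => ‖star ⇑(B i) ⬝ᵥ v‖ with hd
  have step1 : ∑ i, |hΔ.eigenvalues i| ≤ (∑ i, a i * b i) + ∑ i, b i * d i := by
    rw [← Finset.sum_add_distrib]
    exact Finset.sum_le_sum fun i _ => key i
  have cs1 : ∑ i, a i * b i ≤ vnorm u * vnorm w := by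
    refine (cs_sum (fun i => norm_nonneg _) (fun i => norm_nonneg _)).trans ?_
    exact mul_le_mul (bessel B u) (bessel B w) (Real.sqrt_nonneg _) (vnorm_nonneg _)
  have cs2 : ∑ i, b i * d i ≤ vnorm w * vnorm v := by
    refine (cs_sum (fun i => norm_nonneg _) (fun i => norm_nonneg _)).trans ?_
    exact mul_le_mul (bessel B w) (bessel B v) (Real.sqrt_nonneg _) (vnorm_nonneg _)
  calc ∑ i, |hΔ.eigenvalues i| ≤ (∑ i, a i * b i) + ∑ i, b i * d i := step1
    _ ≤ vnorm u * vnorm w + vnorm w * vnorm v := add_le_add cs1 cs2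
    _ = vnorm w * (vnorm u + vnorm v) := by ring

-- ### Stage 3: small-space facts
variable {n : ℕ}

lemma signDot_eq_prod (η y : Yb n) :
    signDot η y = ∏ i, (if η i && y i then (-1:ℂ) else 1) := by
  rw [signDot, Finset.prod_ite, Finset.prod_const, Finset.prod_const, one_pow, mul_one]

lemma signDot_comm (η y : Yb n) : signDot η y = signDot y η := by
  have h : (Finset.filter (fun i => (η i && y i) = true) Finset.univ)
      = (Finset.filter (fun i => (y i && η i) = true) Finset.univ) := by
    apply Finset.filter_congr
    intro i _
    simp [Bool.and_comm]
  rw [signDot, signDot, h]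

lemma signDot_zero (y : Yb n) : signDot (fun _ => false) y = 1 := by
  simp [signDot]

lemma signDot_zero' (y : Yb n) : signDot y (fun _ => false) = 1 := by
  rw [signDot_comm]; exact signDot_zero y

lemma sum_signDot_mul (y y'' : Yb n) :
    ∑ a : Yb n, signDot y a * signDot y'' a = if y = y'' then (2:ℂ)^n else 0 := by
  have h1 : ∀ a : Yb n, signDot y a * signDot y'' a
      = ∏ i, ((if y i && a i then (-1:ℂ) else 1) * (if y'' i && a i then (-1:ℂ) else 1)) := by
    intro a
    rw [signDot_eq_prod, signDot_eq_prod, Finset.prod_mul_distrib]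
  simp only [h1]
  have h2 : ∑ a : Yb n, ∏ i, ((if y i && a i then (-1:ℂ) else 1) *
        (if y'' i && a i then (-1:ℂ) else 1))
      = ∏ i, ∑ b : Bool, ((if y i && b then (-1:ℂ) else 1) * (if y'' i && b then (-1:ℂ) else 1)) := by
    rw [Finset.prod_univ_sum]
    rw [← Fintype.piFinset_univ]
  rw [h2]
  have h3 : ∀ i, (∑ b : Bool, ((if y i && b then (-1:ℂ) else 1) * (if y'' i && b then (-1:ℂ) else 1)))
      = if y i = y'' i then 2 else 0 := by
    intro i
    rw [Fintype.sum_bool]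
    cases hy : y i <;> cases hy' : y'' i <;> norm_num
  simp only [h3]
  by_cases hyy : y = y''
  · subst hyy
    simp
  · obtain ⟨i0, hi0⟩ : ∃ i, y i ≠ y'' i := by
      by_contra hc
      push_neg at hc
      exact hyy (funext hc)
    rw [if_neg hyy]
    exact Finset.prod_eq_zero (Finset.mem_univ i0) (by simp [hi0])

lemma card_Yb : (Fintype.card (Yb n) : ℂ) = (2:ℂ)^n := by
  simp [Fintype.card_fun]

lemma cst_pos : 0 < cst n := Real.rpow_pos_of_pos (by norm_num) _

lemma cst_sq_real : cst n * cst n * (2:ℝ)^(n:ℕ) = 1 := by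
  unfold cst
  rw [← Real.rpow_natCast 2 n, ← Real.rpow_add (by norm_num), ← Real.rpow_add (by norm_num)]
  rw [show -(n:ℝ)/2 + -(n:ℝ)/2 + (n:ℝ) = 0 by ring, Real.rpow_zero]

lemma cst_sq : (cst n : ℂ) * (cst n : ℂ) * (2:ℂ)^n = 1 := by
  have h := cst_sq_real (n := n)
  calc (cst n : ℂ) * cst n * (2:ℂ)^n = (((cst n * cst n * (2:ℝ)^(n:ℕ)) : ℝ) : ℂ) := by
        push_cast; ring
    _ = 1 := by rw [h]; norm_num

/-- the vector |⊥⟩ - |φ₀⟩. -/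
def vk (n : ℕ) : Ybar n → ℂ := fun a => ket none a - phi0 n a

lemma vk_none : vk n none = 1 := by simp [vk, ket, phi0, phi]

lemma vk_some (y : Yb n) : vk n (some y) = -(cst n : ℂ) := by
  simp [vk, ket, phi0, phi, signDot_zero]

lemma star_vk : star (vk n) = vk n := by
  funext a
  cases a with
  | none => simp [vk_none]
  | some y => simp [vk_some, ← Complex.ofReal_neg, Complex.conj_ofReal]

lemma HS_apply (a c : Ybar n) : (Hbar n * Sswap n) a c = Hbar n a (swapBot n c) := by
  rw [Matrix.mul_apply]
  rw [Finset.sum_eq_single (swapBot n c)]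
  · simp [Sswap]
  · intro b _ hb
    simp [Sswap, hb]
  · simp

lemma Fmat_apply (a b : Ybar n) :
    Fmat n a b = ∑ c, Hbar n a (swapBot n c) * Hbar n c b := by
  rw [Fmat, Matrix.mul_apply]
  exact Finset.sum_congr rfl fun c _ => by rw [HS_apply]

lemma swapBot_some_zero : swapBot n (some (fun _ => false)) = none := by
  simp [swapBot]

lemma swapBot_none : swapBot n none = some (fun _ => false) := rfl

lemma Fmat_eq : Fmat n = 1 - Matrix.vecMulVec (vk n) (star (vk n)) := by
  rw [star_vk]
  ext a b
  rw [Fmat_apply, Fintype.sum_option, swapBot_none]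
  simp only [Matrix.sub_apply, Matrix.one_apply, Matrix.vecMulVec_apply]
  cases a with
  | none =>
    have hz : ∀ z : Yb n, z ≠ (fun _ => false) →
        Hbar n none (swapBot n (some z)) * Hbar n (some z) b = 0 := by
      intro z hzz
      rw [show swapBot n (some z) = some z by simp [swapBot, hzz]]
      simp [Hbar]
    rw [Finset.sum_eq_single (fun _ => false)]
    · rw [swapBot_some_zero]
      cases b with
      | none => simp [Hbar, vk_none]
      | some y' => simp [Hbar, vk_none, vk_some, signDot_zero]
    · intro z _ hzz
      exact hz z hzz
    · simp
  | some y =>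
    cases b with
    | none =>
      have hz : ∀ z : Yb n, Hbar n (some y) (swapBot n (some z)) * Hbar n (some z) none = 0 := by
        intro z
        simp [Hbar]
      simp only [hz, Finset.sum_const_zero, add_zero]
      simp [Hbar, vk_none, vk_some, signDot_zero']
    | some y' =>
      have hnone : Hbar n (some y) (some (fun _ => false)) * Hbar n none (some y') = 0 := by
        simp [Hbar]
      rw [hnone, zero_add]
      have hz : ∀ z : Yb n, Hbar n (some y) (swapBot n (some z)) * Hbar n (some z) (some y')
          = (if z = (fun _ => false) then 0 else
              ((cst n : ℂ) * cst n) * (signDot y z * signDot y' z)) := by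
        intro z
        by_cases hzz : z = (fun _ => false)
        · rw [if_pos hzz, hzz, swapBot_some_zero]
          simp [Hbar]
        · rw [if_neg hzz, show swapBot n (some z) = some z by simp [swapBot, hzz]]
          simp only [Hbar, Matrix.of_apply]
          rw [signDot_comm z y']
          ring
      simp only [hz]
      have hsplit : ∀ z : Yb n, (if z = (fun _ => false) then 0 else
              ((cst n : ℂ) * cst n) * (signDot y z * signDot y' z))
          = ((cst n : ℂ) * cst n) * (signDot y z * signDot y' z)
            - (if z = (fun _ => false) then ((cst n : ℂ) * cst n) else 0) := by
        intro z
        by_cases hzz : z = (fun _ => false)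
        · subst hzz
          simp [signDot_zero']
        · simp [hzz]
      simp only [hsplit]
      rw [Finset.sum_sub_distrib, ← Finset.mul_sum, sum_signDot_mul, Finset.sum_ite_eq']
      simp only [Finset.mem_univ, if_true]
      by_cases hyy : y = y'
      · subst hyy
        simp only [if_pos rfl, if_true]
        rw [cst_sq, vk_some]
        ring
      · simp only [if_neg hyy, mul_zero, zero_sub, if_neg (by simp [hyy] : ¬ some y = some y')]
        rw [vk_some, vk_some]
        ring

-- ### Stage 4: small-space operator algebra
lemma vecMulVec_mul_vecMulVec (a b c d : I → ℂ) :
    Matrix.vecMulVec a b * Matrix.vecMulVec c d = (b ⬝ᵥ c) • Matrix.vecMulVec a d := by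
  ext i j
  simp only [Matrix.mul_apply, Matrix.vecMulVec_apply, Matrix.smul_apply, smul_eq_mul,
    dotProduct, Finset.sum_mul]
  exact Finset.sum_congr rfl fun k _ => by ring

lemma diagonal_mul_vecMulVec (d a b : I → ℂ) :
    Matrix.diagonal d * Matrix.vecMulVec a b = Matrix.vecMulVec (fun i => d i * a i) b := by
  ext i j
  rw [Matrix.diagonal_mul]
  simp [Matrix.vecMulVec_apply]
  ring

lemma vecMulVec_mul_diagonal (d a b : I → ℂ) :
    Matrix.vecMulVec a b * Matrix.diagonal d = Matrix.vecMulVec a (fun j => b j * d j) := by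
  ext i j
  rw [Matrix.mul_diagonal]
  simp [Matrix.vecMulVec_apply]
  ring

lemma comm_sandwich {A C Q : Matrix I I ℂ} (hC : C * Q = Q * C) :
    A * C * A * Q - Q * (A * C * A) = A * C * (A * Q - Q * A) + (A * Q - Q * A) * C * A := by
  simp only [mul_sub, sub_mul, ← mul_assoc]
  rw [show A * C * Q = A * Q * C from by rw [mul_assoc, hC, ← mul_assoc]]
  abel

lemma vk_dot : star (vk n) ⬝ᵥ vk n = 2 := by
  rw [star_vk]
  unfold dotProduct
  rw [Fintype.sum_option]
  have h1 : ∀ y : Yb n, vk n (some y) * vk n (some y) = (cst n : ℂ) * cst n := by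
    intro y
    rw [vk_some]
    ring
  rw [Finset.sum_congr rfl fun y _ => h1 y, Finset.sum_const, Finset.card_univ,
    nsmul_eq_mul, vk_none]
  have h2 := cst_sq (n := n)
  rw [card_Yb]
  linear_combination h2

lemma Fmat_herm : (Fmat n)ᴴ = Fmat n := by
  rw [Fmat_eq, star_vk]
  ext a b
  simp only [Matrix.conjTranspose_apply, Matrix.sub_apply, Matrix.one_apply,
    Matrix.vecMulVec_apply]
  have hs : ∀ c, (starRingEnd ℂ) (vk n c) = vk n c := fun c => by
    have := congrFun (star_vk (n := n)) c
    simpa [Complex.star_def] using this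
  rw [Complex.star_def, map_sub, _root_.map_mul, hs, hs, apply_ite (starRingEnd ℂ), _root_.map_one, _root_.map_zero]
  by_cases h : a = b
  · subst h; simp
  · rw [if_neg h, if_neg fun hh => h hh.symm]
    ring

lemma Fmat_unitary : (Fmat n)ᴴ * Fmat n = 1 := by
  rw [Fmat_herm, Fmat_eq]
  rw [sub_mul, mul_sub, mul_sub, one_mul, mul_one, vecMulVec_mul_vecMulVec, vk_dot]
  simp only [one_mul, two_smul]
  abel

-- CNOT small
lemma cnotFun_invol : Function.Involutive (cnotFun n) := by
  intro p
  rcases p with ⟨y, a⟩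
  cases a with
  | none => rfl
  | some y' =>
    show (xorY (xorY y y') y', some y') = (y, some y')
    have : xorY (xorY y y') y' = y := by
      funext i
      simp [xorY, Bool.xor_assoc]
    rw [this]

-- ### Stage 4b
section WithR
variable {X : Type*} [Fintype X] [DecidableEq X] (R : X → Yb n → Prop) [∀ x, DecidablePred (R x)]

/-- Π·v. -/
def uk (x : X) : Ybar n → ℂ := fun a => (if hitB R x a then 1 else 0) * vk n a

lemma star_uk (x : X) : star (uk R x) = uk R x := by
  funext a
  have hv : (starRingEnd ℂ) (vk n a) = vk n a := by
    have := congrFun (star_vk (n := n)) a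
    simpa [Complex.star_def] using this
  simp only [Pi.star_apply, uk, Complex.star_def, _root_.map_mul, hv,
    apply_ite (starRingEnd ℂ), _root_.map_one, _root_.map_zero]

lemma smallE_eq (x : X) :
    Fmat n * Pix R x - Pix R x * Fmat n
      = Matrix.vecMulVec (uk R x) (star (vk n)) - Matrix.vecMulVec (vk n) (star (uk R x)) := by
  rw [Fmat_eq, star_vk, star_uk]
  rw [sub_mul, mul_sub, one_mul, mul_one]
  rw [show Pix R x = Matrix.diagonal (fun a => if hitB R x a then (1:ℂ) else 0) from rfl]
  rw [diagonal_mul_vecMulVec, vecMulVec_mul_diagonal]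
  have h1 : (fun i => (if hitB R x i then (1:ℂ) else 0) * vk n i) = uk R x := rfl
  have h2 : (fun j => vk n j * (if hitB R x j then (1:ℂ) else 0)) = uk R x := by
    funext j
    rw [mul_comm]
    rfl
  rw [h1, h2]
  abel

lemma card_Yb_real : (Fintype.card (Yb n) : ℝ) = (2:ℝ)^(n:ℕ) := by
  simp [Fintype.card_fun]

lemma abs_vk_some (y : Yb n) : ‖vk n (some y)‖ = cst n := by
  rw [vk_some, ← Complex.ofReal_neg]
  rw [Complex.norm_real, Real.norm_eq_abs]
  rw [abs_neg, abs_of_pos cst_pos]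

lemma vnorm_vk : vnorm (vk n) = Real.sqrt 2 := by
  unfold vnorm
  congr 1
  rw [Fintype.sum_option]
  have h1 : ‖vk n none‖ = 1 := by rw [vk_none]; simp
  have h2 : ∀ y : Yb n, ‖vk n (some y)‖ ^ 2 = cst n * cst n := by
    intro y
    rw [abs_vk_some]
    ring
  rw [h1, Finset.sum_congr rfl fun y _ => h2 y, Finset.sum_const, Finset.card_univ,
    nsmul_eq_mul, card_Yb_real]
  have := cst_sq_real (n := n)
  nlinarith [this]

lemma vnorm_uk_le (x : X) : vnorm (uk R x) ≤ Real.sqrt (GamR R) * cst n := by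
  have hsum : ∑ a, ‖uk R x a‖ ^ 2 = (Gam R x : ℝ) * (cst n * cst n) := by
    rw [Fintype.sum_option]
    have h0 : ‖uk R x none‖ ^ 2 = 0 := by
      simp [uk, hitB]
    have h1 : ∀ y : Yb n, ‖uk R x (some y)‖ ^ 2
        = if R x y then cst n * cst n else 0 := by
      intro y
      by_cases hr : R x y
      · rw [if_pos hr]
        have he : uk R x (some y) = vk n (some y) := by
          simp [uk, hitB, hr]
        rw [he, abs_vk_some]
        ring
      · have he : uk R x (some y) = 0 := by simp [uk, hitB, hr]
        simp [he, hr]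
    rw [h0, Finset.sum_congr rfl fun y _ => h1 y, Finset.sum_ite, Finset.sum_const,
      Finset.sum_const_zero, add_zero, zero_add, nsmul_eq_mul]
    rfl
  have hmono : (Gam R x : ℝ) ≤ (GamR R : ℝ) := by
    exact_mod_cast Finset.le_sup (f := fun x => Gam R x) (Finset.mem_univ x)
  unfold vnorm
  rw [hsum]
  calc Real.sqrt ((Gam R x : ℝ) * (cst n * cst n))
      ≤ Real.sqrt ((GamR R : ℝ) * (cst n * cst n)) := by
        apply Real.sqrt_le_sqrt
        exact mul_le_mul_of_nonneg_right hmono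
          (mul_nonneg (le_of_lt cst_pos) (le_of_lt cst_pos))
    _ = Real.sqrt (GamR R) * cst n := by
        rw [Real.sqrt_mul (Nat.cast_nonneg _), show cst n * cst n = cst n ^ 2 by ring,
          Real.sqrt_sq (le_of_lt cst_pos)]

lemma smallE_bound (x : X) (t : Ybar n → ℂ) :
    vnorm ((Fmat n * Pix R x - Pix R x * Fmat n).mulVec t)
      ≤ (2 * (Real.sqrt (GamR R) * cst n) * Real.sqrt 2) * vnorm t := by
  rw [smallE_eq, Matrix.sub_mulVec, vecMulVec_mulVec, vecMulVec_mulVec]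
  refine (vnorm_sub_le _ _).trans ?_
  rw [vnorm_smul, vnorm_smul]
  have h1 : ‖star (vk n) ⬝ᵥ t‖ ≤ Real.sqrt 2 * vnorm t := by
    refine (abs_star_dot_le _ _).trans ?_
    rw [vnorm_vk]
  have h2 : ‖star (uk R x) ⬝ᵥ t‖ ≤ (Real.sqrt (GamR R) * cst n) * vnorm t := by
    refine (abs_star_dot_le _ _).trans ?_
    exact mul_le_mul_of_nonneg_right (vnorm_uk_le R x) (vnorm_nonneg _)
  have h3 := vnorm_uk_le R x
  have h4 : vnorm (vk n) = Real.sqrt 2 := vnorm_vk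
  have n1 : (0:ℝ) ≤ Real.sqrt 2 := Real.sqrt_nonneg _
  have n2 : (0:ℝ) ≤ Real.sqrt (GamR R) * cst n :=
    mul_nonneg (Real.sqrt_nonneg _) (le_of_lt cst_pos)
  have n3 : (0:ℝ) ≤ vnorm t := vnorm_nonneg _
  have n4 : (0:ℝ) ≤ vnorm (uk R x) := vnorm_nonneg _
  have n5 : (0:ℝ) ≤ ‖star (vk n) ⬝ᵥ t‖ := norm_nonneg _
  have n6 : (0:ℝ) ≤ ‖star (uk R x) ⬝ᵥ t‖ := norm_nonneg _
  rw [h4]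
  have b1 : ‖star (vk n) ⬝ᵥ t‖ * vnorm (uk R x)
      ≤ (Real.sqrt 2 * vnorm t) * (Real.sqrt (GamR R) * cst n) :=
    mul_le_mul h1 h3 n4 (mul_nonneg n1 n3)
  have b2 : ‖star (uk R x) ⬝ᵥ t‖ * Real.sqrt 2
      ≤ ((Real.sqrt (GamR R) * cst n) * vnorm t) * Real.sqrt 2 :=
    mul_le_mul_of_nonneg_right h2 n1
  nlinarith [b1, b2]

end WithR

-- ### Stage 4c: Y ⊗ Ȳ level
section WithR2
variable {X : Type*} [Fintype X] [DecidableEq X] (R : X → Yb n → Prop) [∀ x, DecidablePred (R x)]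

lemma kron_one_conjT (B : Matrix (Ybar n) (Ybar n) ℂ) :
    ((1 : Matrix (Yb n) (Yb n) ℂ) ⊗ₖ B)ᴴ = (1 : Matrix (Yb n) (Yb n) ℂ) ⊗ₖ Bᴴ := by
  ext p q
  simp only [Matrix.conjTranspose_apply, Matrix.kroneckerMap_apply, Matrix.one_apply]
  by_cases h : p.1 = q.1
  · simp [h, Complex.star_def]
  · have h' : ¬ q.1 = p.1 := fun hh => h hh.symm
    simp [h, h']

lemma kron_one_sub (A B : Matrix (Ybar n) (Ybar n) ℂ) :
    (1 : Matrix (Yb n) (Yb n) ℂ) ⊗ₖ A - (1 : Matrix (Yb n) (Yb n) ℂ) ⊗ₖ B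
      = (1 : Matrix (Yb n) (Yb n) ℂ) ⊗ₖ (A - B) := by
  ext p q
  simp only [Matrix.sub_apply, Matrix.kroneckerMap_apply]
  ring

lemma Fsm_unitary :
    ((1 : Matrix (Yb n) (Yb n) ℂ) ⊗ₖ Fmat n)ᴴ * ((1 : Matrix (Yb n) (Yb n) ℂ) ⊗ₖ Fmat n) = 1 := by
  rw [kron_one_conjT, ← Matrix.mul_kronecker_mul, Fmat_unitary, one_mul,
    Matrix.one_kronecker_one]

lemma Csm_unitary : (CNOTmat n)ᴴ * CNOTmat n = 1 :=
  perm_unitary (cnotFun_invol (n := n)).injective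

lemma cnotFun_snd (q : Yb n × Ybar n) : (cnotFun n q).2 = q.2 := by
  rcases q with ⟨y, a⟩
  cases a <;> rfl

lemma Qsm_diag (x : X) : (1 : Matrix (Yb n) (Yb n) ℂ) ⊗ₖ Pix R x
    = Matrix.diagonal (fun p : Yb n × Ybar n => if hitB R x p.2 then (1:ℂ) else 0) := by
  ext ⟨y, a⟩ ⟨y', b⟩
  simp only [Matrix.kroneckerMap_apply, Matrix.one_apply, Pix, Matrix.diagonal_apply]
  by_cases h1 : y = y'
  · by_cases h2 : a = b
    · simp [h1, h2, Prod.ext_iff]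
    · simp [h1, h2, Prod.ext_iff]
  · simp [h1, Prod.ext_iff]

lemma Csm_comm_Q (x : X) : CNOTmat n * ((1 : Matrix (Yb n) (Yb n) ℂ) ⊗ₖ Pix R x)
    = ((1 : Matrix (Yb n) (Yb n) ℂ) ⊗ₖ Pix R x) * CNOTmat n := by
  rw [Qsm_diag]
  ext p q
  rw [Matrix.mul_diagonal, Matrix.diagonal_mul]
  by_cases h : p = cnotFun n q
  · have h2 : p.2 = q.2 := by rw [h]; exact cnotFun_snd q
    rw [h2]
    ring
  · have hz : CNOTmat n p q = 0 := by simp [CNOTmat, h]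
    rw [hz]
    ring

/-- the small-space operator O = F·CNOT·F. -/
def Osm (n : ℕ) : Matrix (Yb n × Ybar n) (Yb n × Ybar n) ℂ :=
  ((1 : Matrix (Yb n) (Yb n) ℂ) ⊗ₖ Fmat n) * CNOTmat n * ((1 : Matrix (Yb n) (Yb n) ℂ) ⊗ₖ Fmat n)

lemma Osm_unitary : (Osm n)ᴴ * Osm n = 1 := by
  unfold Osm
  set F := (1 : Matrix (Yb n) (Yb n) ℂ) ⊗ₖ Fmat n with hF
  set C := CNOTmat n with hC
  have hFu : Fᴴ * F = 1 := Fsm_unitary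
  have hCu : Cᴴ * C = 1 := Csm_unitary
  have hFu2 : F * Fᴴ = 1 := mul_eq_one_comm.mp hFu
  have hCu2 : C * Cᴴ = 1 := mul_eq_one_comm.mp hCu
  rw [Matrix.conjTranspose_mul, Matrix.conjTranspose_mul]
  calc Fᴴ * (Cᴴ * Fᴴ) * (F * C * F) = Fᴴ * Cᴴ * (Fᴴ * F) * C * F := by noncomm_ring
    _ = 1 := by rw [hFu]; rw [show Fᴴ * Cᴴ * 1 * C * F = Fᴴ * (Cᴴ * C) * F by noncomm_ring, hCu,
          show Fᴴ * 1 * F = Fᴴ * F by noncomm_ring, hFu]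

lemma Osm_comm (x : X) :
    Osm n * ((1 : Matrix (Yb n) (Yb n) ℂ) ⊗ₖ Pix R x)
      - ((1 : Matrix (Yb n) (Yb n) ℂ) ⊗ₖ Pix R x) * Osm n
    = ((1 : Matrix (Yb n) (Yb n) ℂ) ⊗ₖ Fmat n) * CNOTmat n *
        ((1 : Matrix (Yb n) (Yb n) ℂ) ⊗ₖ (Fmat n * Pix R x - Pix R x * Fmat n))
      + ((1 : Matrix (Yb n) (Yb n) ℂ) ⊗ₖ (Fmat n * Pix R x - Pix R x * Fmat n)) * CNOTmat n *
        ((1 : Matrix (Yb n) (Yb n) ℂ) ⊗ₖ Fmat n) := by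
  have hE : (1 : Matrix (Yb n) (Yb n) ℂ) ⊗ₖ Fmat n * ((1 : Matrix (Yb n) (Yb n) ℂ) ⊗ₖ Pix R x)
      - ((1 : Matrix (Yb n) (Yb n) ℂ) ⊗ₖ Pix R x) * ((1 : Matrix (Yb n) (Yb n) ℂ) ⊗ₖ Fmat n)
      = (1 : Matrix (Yb n) (Yb n) ℂ) ⊗ₖ (Fmat n * Pix R x - Pix R x * Fmat n) := by
    rw [← Matrix.mul_kronecker_mul, ← Matrix.mul_kronecker_mul, one_mul, kron_one_sub]
  rw [← hE]
  exact comm_sandwich (Csm_comm_Q R x)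

end WithR2

-- ### Stage 5a: lifting small operators to the big space
section Big
variable {W X : Type*} [Fintype W] [DecidableEq W] [Fintype X] [DecidableEq X]

/-- lift an x-indexed family of operators on Y×Ȳ to W×X×Y×D̄×P, acting on (Y, D_x). -/
def liftX (n : ℕ) (W : Type*) [Fintype W] [DecidableEq W]
    (B : X → Matrix (Yb n × Ybar n) (Yb n × Ybar n) ℂ) :
    Matrix (W × X × Yb n × Db n X × Ptr X) (W × X × Yb n × Db n X × Ptr X) ℂ :=
  Matrix.of fun p q =>
    if p.1 = q.1 ∧ p.2.1 = q.2.1 ∧ p.2.2.2.2 = q.2.2.2.2 ∧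
        (∀ x', x' ≠ p.2.1 → p.2.2.2.1 x' = q.2.2.2.1 x') then
      B p.2.1 (p.2.2.1, p.2.2.2.1 p.2.1) (q.2.2.1, q.2.2.2.1 p.2.1)
    else 0

/-- the parametrization of indices agreeing with p except at (Y, D_x). -/
def rhoB (p : W × X × Yb n × Db n X × Ptr X) (s : Yb n × Ybar n) :
    W × X × Yb n × Db n X × Ptr X :=
  (p.1, p.2.1, s.1, Function.update p.2.2.2.1 p.2.1 s.2, p.2.2.2.2)

lemma rhoB_inj (p : W × X × Yb n × Db n X × Ptr X) : Function.Injective (rhoB p) := by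
  intro s t h
  have h1 : s.1 = t.1 := congrArg (fun r => r.2.2.1) h
  have h2 : s.2 = t.2 := by
    have := congrArg (fun r => r.2.2.2.1 p.2.1) h
    simpa [rhoB, Function.update_self] using this
  exact Prod.ext h1 h2

lemma mem_range_rhoB {p r : W × X × Yb n × Db n X × Ptr X}
    (h1 : p.1 = r.1) (h2 : p.2.1 = r.2.1) (h3 : p.2.2.2.2 = r.2.2.2.2)
    (h4 : ∀ x', x' ≠ p.2.1 → p.2.2.2.1 x' = r.2.2.2.1 x') :
    r = rhoB p (r.2.2.1, r.2.2.2.1 p.2.1) := by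
  simp only [rhoB, Prod.ext_iff]
  refine ⟨h1.symm, h2.symm, trivial, ?_, h3.symm⟩
  funext z
  by_cases hz : z = p.2.1
  · subst hz
    rw [Function.update_self]
  · rw [Function.update_of_ne hz]
    exact (h4 z hz).symm

lemma liftX_mul (B B' : X → Matrix (Yb n × Ybar n) (Yb n × Ybar n) ℂ) :
    liftX n W B * liftX n W B' = liftX n W (fun x => B x * B' x) := by
  ext p q
  rw [Matrix.mul_apply]
  rw [sum_collapse (rhoB_inj p) _ ?h0]
  case h0 =>
    intro r hr
    by_cases hc : p.1 = r.1 ∧ p.2.1 = r.2.1 ∧ p.2.2.2.2 = r.2.2.2.2 ∧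
        (∀ x', x' ≠ p.2.1 → p.2.2.2.1 x' = r.2.2.2.1 x')
    · exact absurd (mem_range_rhoB hc.1 hc.2.1 hc.2.2.1 hc.2.2.2) (hr _)
    · rw [show liftX n W B p r = 0 from by rw [liftX, Matrix.of_apply, if_neg hc], zero_mul]
  have h1 : ∀ s, liftX n W B p (rhoB p s) = B p.2.1 (p.2.2.1, p.2.2.2.1 p.2.1) s := by
    intro s
    rw [liftX, Matrix.of_apply, if_pos ?hc]
    case hc =>
      refine ⟨rfl, rfl, rfl, fun x' hx' => ?_⟩
      show p.2.2.2.1 x' = Function.update p.2.2.2.1 p.2.1 s.2 x'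
      rw [Function.update_of_ne hx']
    show B p.2.1 _ (s.1, Function.update p.2.2.2.1 p.2.1 s.2 p.2.1) = _
    rw [Function.update_self]
  have h2 : ∀ s, liftX n W B' (rhoB p s) q =
      (if p.1 = q.1 ∧ p.2.1 = q.2.1 ∧ p.2.2.2.2 = q.2.2.2.2 ∧
          (∀ x', x' ≠ p.2.1 → p.2.2.2.1 x' = q.2.2.2.1 x') then
        B' p.2.1 s (q.2.2.1, q.2.2.2.1 p.2.1) else 0) := by
    intro s
    by_cases hc : p.1 = q.1 ∧ p.2.1 = q.2.1 ∧ p.2.2.2.2 = q.2.2.2.2 ∧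
        (∀ x', x' ≠ p.2.1 → p.2.2.2.1 x' = q.2.2.2.1 x')
    · rw [if_pos hc, liftX, Matrix.of_apply, if_pos ?hc2]
      case hc2 =>
        refine ⟨hc.1, hc.2.1, hc.2.2.1, fun x' hx' => ?_⟩
        show Function.update p.2.2.2.1 p.2.1 s.2 x' = q.2.2.2.1 x'
        have hx'' : x' ≠ p.2.1 := hx'
        rw [Function.update_of_ne hx'']
        exact hc.2.2.2 x' hx''
      show B' p.2.1 (s.1, Function.update p.2.2.2.1 p.2.1 s.2 p.2.1) (q.2.2.1, q.2.2.2.1 p.2.1)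
          = B' p.2.1 s (q.2.2.1, q.2.2.2.1 p.2.1)
      rw [Function.update_self]
    · rw [if_neg hc, liftX, Matrix.of_apply, if_neg ?hc3]
      case hc3 =>
        intro hcc
        apply hc
        refine ⟨hcc.1, hcc.2.1, hcc.2.2.1, fun x' hx' => ?_⟩
        have hx'' : x' ≠ (rhoB p s).2.1 := hx'
        have := hcc.2.2.2 x' hx''
        rw [show (rhoB p s).2.2.2.1 x' = p.2.2.2.1 x' from Function.update_of_ne hx' _ _] at this
        exact this
  simp only [h1, h2]
  rw [liftX, Matrix.of_apply]
  by_cases hc : p.1 = q.1 ∧ p.2.1 = q.2.1 ∧ p.2.2.2.2 = q.2.2.2.2 ∧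
      (∀ x', x' ≠ p.2.1 → p.2.2.2.1 x' = q.2.2.2.1 x')
  · simp only [if_pos hc]
    rw [Matrix.mul_apply]
  · simp only [if_neg hc, mul_zero, Finset.sum_const_zero]

-- medium-level lift on Y × D̄
def liftYD (x : X) (B : Matrix (Yb n × Ybar n) (Yb n × Ybar n) ℂ) :
    Matrix (Yb n × Db n X) (Yb n × Db n X) ℂ :=
  Matrix.of fun a b =>
    if ∀ x', x' ≠ x → a.2 x' = b.2 x' then B (a.1, a.2 x) (b.1, b.2 x) else 0

def rhoM (x : X) (a : Yb n × Db n X) (s : Yb n × Ybar n) : Yb n × Db n X :=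
  (s.1, Function.update a.2 x s.2)

lemma rhoM_inj (x : X) (a : Yb n × Db n X) : Function.Injective (rhoM x a) := by
  intro s t h
  have h1 : s.1 = t.1 := congrArg (fun r => r.1) h
  have h2 : s.2 = t.2 := by
    have := congrArg (fun r => r.2 x) h
    simpa [rhoM, Function.update_self] using this
  exact Prod.ext h1 h2

lemma mem_range_rhoM {x : X} {a b : Yb n × Db n X}
    (h4 : ∀ x', x' ≠ x → a.2 x' = b.2 x') :
    b = rhoM x a (b.1, b.2 x) := by
  simp only [rhoM, Prod.ext_iff]
  refine ⟨trivial, ?_⟩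
  funext z
  by_cases hz : z = x
  · subst hz
    rw [Function.update_self]
  · rw [Function.update_of_ne hz]
    exact (h4 z hz).symm

lemma liftYD_mul (x : X) (B B' : Matrix (Yb n × Ybar n) (Yb n × Ybar n) ℂ) :
    liftYD (n := n) x B * liftYD x B' = liftYD x (B * B') := by
  ext a b
  rw [Matrix.mul_apply]
  rw [sum_collapse (rhoM_inj x a) _ ?h0]
  case h0 =>
    intro r hr
    by_cases hc : ∀ x', x' ≠ x → a.2 x' = r.2 x'
    · exact absurd (mem_range_rhoM hc) (hr _)
    · rw [show liftYD x B a r = 0 from by rw [liftYD, Matrix.of_apply, if_neg hc], zero_mul]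
  have h1 : ∀ s, liftYD x B a (rhoM x a s) = B (a.1, a.2 x) s := by
    intro s
    rw [liftYD, Matrix.of_apply, if_pos ?hc]
    case hc =>
      intro x' hx'
      show a.2 x' = Function.update a.2 x s.2 x'
      rw [Function.update_of_ne hx']
    show B (a.1, a.2 x) (s.1, Function.update a.2 x s.2 x) = _
    rw [Function.update_self]
  have h2 : ∀ s, liftYD x B' (rhoM x a s) b =
      (if ∀ x', x' ≠ x → a.2 x' = b.2 x' then B' s (b.1, b.2 x) else 0) := by
    intro s
    by_cases hc : ∀ x', x' ≠ x → a.2 x' = b.2 x'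
    · rw [if_pos hc, liftYD, Matrix.of_apply, if_pos ?hc2]
      case hc2 =>
        intro x' hx'
        show Function.update a.2 x s.2 x' = b.2 x'
        rw [Function.update_of_ne hx']
        exact hc x' hx'
      show B' (s.1, Function.update a.2 x s.2 x) (b.1, b.2 x) = B' s (b.1, b.2 x)
      rw [Function.update_self]
    · rw [if_neg hc, liftYD, Matrix.of_apply, if_neg ?hc3]
      case hc3 =>
        intro hcc
        apply hc
        intro x' hx'
        have := hcc x' hx'
        rw [show (rhoM x a s).2 x' = a.2 x' from Function.update_of_ne hx' _ _] at this
        exact this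
  simp only [h1, h2]
  rw [liftYD, Matrix.of_apply]
  by_cases hc : ∀ x', x' ≠ x → a.2 x' = b.2 x'
  · simp only [if_pos hc]
    rw [Matrix.mul_apply]
  · simp only [if_neg hc, mul_zero, Finset.sum_const_zero]

lemma FDx_lift (x : X) : (1 : Matrix (Yb n) (Yb n) ℂ) ⊗ₖ FDx n x
    = liftYD x ((1 : Matrix (Yb n) (Yb n) ℂ) ⊗ₖ Fmat n) := by
  ext a b
  simp only [Matrix.kroneckerMap_apply, liftYD, Matrix.of_apply, FDx, onCoord]
  by_cases hc : ∀ x', x' ≠ x → a.2 x' = b.2 x'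
  · rw [if_pos hc, if_pos hc]
  · rw [if_neg hc, if_neg hc, mul_zero]

lemma cnotDFun_snd (x : X) (b : Yb n × Db n X) : (cnotDFun x b).2 = b.2 := by
  rcases b with ⟨y, d⟩
  unfold cnotDFun
  rcases hd : d x with _ | yx
  · simp [hd]
  · simp [hd]

lemma CNOTD_lift (x : X) : CNOTD (n := n) x = liftYD x (CNOTmat n) := by
  ext a b
  simp only [CNOTD, CNOTmat, liftYD, Matrix.of_apply]
  by_cases hc : ∀ x', x' ≠ x → a.2 x' = b.2 x'
  · rw [if_pos hc]
    refine if_congr ?_ rfl rfl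
    rcases hbx : b.2 x with _ | yx
    · have hdf : cnotDFun x b = b := by
        unfold cnotDFun
        rw [hbx]
      have hcf : cnotFun n (b.1, (none : Ybar n)) = (b.1, none) := rfl
      rw [hdf, hcf]
      constructor
      · rintro rfl
        rw [Prod.ext_iff]
        exact ⟨rfl, hbx⟩
      · intro h
        rw [Prod.mk.injEq] at h
        refine Prod.ext h.1 (funext fun z => ?_)
        by_cases hz : z = x
        · subst hz
          rw [h.2, hbx]
        · exact hc z hz
    · have hdf : cnotDFun x b = (xorY b.1 yx, b.2) := by
        unfold cnotDFun
        rw [hbx]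
      have hcf : cnotFun n (b.1, some yx) = (xorY b.1 yx, some yx) := rfl
      rw [hdf, hcf]
      constructor
      · rintro rfl
        rw [Prod.ext_iff]
        exact ⟨rfl, hbx⟩
      · intro h
        rw [Prod.mk.injEq] at h
        refine Prod.ext h.1 (funext fun z => ?_)
        by_cases hz : z = x
        · subst hz
          rw [h.2, hbx]
        · exact hc z hz
  · rw [if_neg hc, if_neg ?hn]
    case hn =>
      intro heq
      apply hc
      intro x' hx'
      rw [heq, cnotDFun_snd]

lemma OxD_lift (x : X) : OxD n x = liftYD x (Osm n) := by
  rw [OxD, FDx_lift, CNOTD_lift, liftYD_mul, liftYD_mul]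
  rfl

lemma OW_eq : OW n W X = liftX n W (fun _ : X => Osm n) := by
  ext p q
  simp only [OW, OXYD, Matrix.of_apply, liftX]
  rw [OxD_lift]
  by_cases h1 : p.1 = q.1
  · by_cases h2 : p.2.1 = q.2.1
    · by_cases h3 : p.2.2.2.2 = q.2.2.2.2
      · rw [if_pos ⟨h1, h3⟩, if_pos h2]
        rw [show liftYD p.2.1 (Osm n) (p.2.2.1, p.2.2.2.1) (q.2.2.1, q.2.2.2.1)
            = (if ∀ x', x' ≠ p.2.1 → p.2.2.2.1 x' = q.2.2.2.1 x' then
                Osm n (p.2.2.1, p.2.2.2.1 p.2.1) (q.2.2.1, q.2.2.2.1 p.2.1) else 0) from rfl]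
        by_cases h4 : ∀ x', x' ≠ p.2.1 → p.2.2.2.1 x' = q.2.2.2.1 x'
        · rw [if_pos h4, if_pos ⟨h1, h2, h3, h4⟩]
        · rw [if_neg h4, if_neg (by rintro ⟨_, _, _, hh⟩; exact h4 hh)]
      · rw [if_neg (by rintro ⟨_, hh⟩; exact h3 hh),
          if_neg (by rintro ⟨_, _, hh, _⟩; exact h3 hh)]
    · by_cases h3 : p.2.2.2.2 = q.2.2.2.2
      · rw [if_pos ⟨h1, h3⟩, if_neg h2, if_neg (by rintro ⟨_, hh, _, _⟩; exact h2 hh)]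
      · rw [if_neg (by rintro ⟨_, hh⟩; exact h3 hh),
          if_neg (by rintro ⟨_, _, hh, _⟩; exact h3 hh)]
  · rw [if_neg (by rintro ⟨hh, _⟩; exact h1 hh), if_neg (by rintro ⟨hh, _⟩; exact h1 hh)]


lemma liftX_conjT (B : X → Matrix (Yb n × Ybar n) (Yb n × Ybar n) ℂ) :
    (liftX n W B)ᴴ = liftX n W (fun x => (B x)ᴴ) := by
  ext p q
  simp only [Matrix.conjTranspose_apply, liftX, Matrix.of_apply]
  by_cases hc : p.1 = q.1 ∧ p.2.1 = q.2.1 ∧ p.2.2.2.2 = q.2.2.2.2 ∧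
      (∀ x', x' ≠ p.2.1 → p.2.2.2.1 x' = q.2.2.2.1 x')
  · have hc' : q.1 = p.1 ∧ q.2.1 = p.2.1 ∧ q.2.2.2.2 = p.2.2.2.2 ∧
        (∀ x', x' ≠ q.2.1 → q.2.2.2.1 x' = p.2.2.2.1 x') := by
      refine ⟨hc.1.symm, hc.2.1.symm, hc.2.2.1.symm, fun x' hx' => ?_⟩
      exact (hc.2.2.2 x' (by rw [hc.2.1]; exact hx')).symm
    rw [if_pos hc', if_pos hc]
    have hx := hc.2.1
    rw [hx]
  · have hcn : ¬(q.1 = p.1 ∧ q.2.1 = p.2.1 ∧ q.2.2.2.2 = p.2.2.2.2 ∧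
        (∀ x', x' ≠ q.2.1 → q.2.2.2.1 x' = p.2.2.2.1 x')) := by
      intro hcc
      apply hc
      refine ⟨hcc.1.symm, hcc.2.1.symm, hcc.2.2.1.symm, fun x' hx' => ?_⟩
      exact (hcc.2.2.2 x' (by rw [hcc.2.1]; exact hx')).symm
    rw [if_neg hcn, if_neg hc, star_zero]

lemma liftX_one : liftX n W (fun _ : X => (1 : Matrix (Yb n × Ybar n) (Yb n × Ybar n) ℂ)) = 1 := by
  ext p q
  simp only [liftX, Matrix.of_apply, Matrix.one_apply]
  by_cases hpq : p = q
  · subst hpq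
    rw [if_pos ⟨rfl, rfl, rfl, fun _ _ => rfl⟩, if_pos rfl, if_pos rfl]
  · rw [if_neg hpq]
    by_cases hc : p.1 = q.1 ∧ p.2.1 = q.2.1 ∧ p.2.2.2.2 = q.2.2.2.2 ∧
        (∀ x', x' ≠ p.2.1 → p.2.2.2.1 x' = q.2.2.2.1 x')
    · rw [if_pos hc, if_neg ?hpair]
      case hpair =>
        intro hpr
        apply hpq
        rw [Prod.mk.injEq] at hpr
        have hd : p.2.2.2.1 = q.2.2.2.1 := by
          funext z
          by_cases hz : z = p.2.1
          · subst hz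
            exact hpr.2
          · exact hc.2.2.2 z hz
        rcases p with ⟨w, x, y, d, pi⟩
        rcases q with ⟨w', x', y', d', pi'⟩
        simp only at hc hpr hd ⊢
        rw [Prod.mk.injEq, Prod.mk.injEq, Prod.mk.injEq, Prod.mk.injEq]
        exact ⟨hc.1, hc.2.1, hpr.1, hd, hc.2.2.1⟩
    · rw [if_neg hc]

lemma liftX_add (B B' : X → Matrix (Yb n × Ybar n) (Yb n × Ybar n) ℂ) :
    liftX n W (fun x => B x + B' x) = liftX n W B + liftX n W B' := by
  ext p q
  simp only [liftX, Matrix.of_apply, Matrix.add_apply]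
  by_cases hc : p.1 = q.1 ∧ p.2.1 = q.2.1 ∧ p.2.2.2.2 = q.2.2.2.2 ∧
      (∀ x', x' ≠ p.2.1 → p.2.2.2.1 x' = q.2.2.2.1 x')
  · rw [if_pos hc, if_pos hc, if_pos hc]
  · rw [if_neg hc, if_neg hc, if_neg hc, add_zero]

lemma liftX_sub (B B' : X → Matrix (Yb n × Ybar n) (Yb n × Ybar n) ℂ) :
    liftX n W (fun x => B x - B' x) = liftX n W B - liftX n W B' := by
  ext p q
  simp only [liftX, Matrix.of_apply, Matrix.sub_apply]
  by_cases hc : p.1 = q.1 ∧ p.2.1 = q.2.1 ∧ p.2.2.2.2 = q.2.2.2.2 ∧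
      (∀ x', x' ≠ p.2.1 → p.2.2.2.1 x' = q.2.2.2.1 x')
  · rw [if_pos hc, if_pos hc, if_pos hc]
  · rw [if_neg hc, if_neg hc, if_neg hc, sub_zero]

/-- lift of an x-indexed family of operators on Ȳ, acting on D_x only. -/
def liftD (n : ℕ) (W : Type*) [Fintype W] [DecidableEq W]
    (B : X → Matrix (Ybar n) (Ybar n) ℂ) :
    Matrix (W × X × Yb n × Db n X × Ptr X) (W × X × Yb n × Db n X × Ptr X) ℂ :=
  Matrix.of fun p q =>
    if p.1 = q.1 ∧ p.2.1 = q.2.1 ∧ p.2.2.1 = q.2.2.1 ∧ p.2.2.2.2 = q.2.2.2.2 ∧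
        (∀ x', x' ≠ p.2.1 → p.2.2.2.1 x' = q.2.2.2.1 x') then
      B p.2.1 (p.2.2.2.1 p.2.1) (q.2.2.2.1 p.2.1)
    else 0

lemma liftX_kron_one (B : X → Matrix (Ybar n) (Ybar n) ℂ) :
    liftX n W (fun x => (1 : Matrix (Yb n) (Yb n) ℂ) ⊗ₖ B x) = liftD n W B := by
  ext p q
  simp only [liftX, liftD, Matrix.of_apply, Matrix.kroneckerMap_apply, Matrix.one_apply]
  by_cases hc : p.1 = q.1 ∧ p.2.1 = q.2.1 ∧ p.2.2.2.2 = q.2.2.2.2 ∧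
      (∀ x', x' ≠ p.2.1 → p.2.2.2.1 x' = q.2.2.2.1 x')
  · rw [if_pos hc]
    by_cases hy : p.2.2.1 = q.2.2.1
    · rw [if_pos hy, if_pos ⟨hc.1, hc.2.1, hy, hc.2.2.1, hc.2.2.2⟩, one_mul]
    · rw [if_neg hy, if_neg (by rintro ⟨_, _, hh, _, _⟩; exact hy hh), zero_mul]
  · rw [if_neg hc, if_neg (by rintro ⟨h1', h2', h3', h4', h5'⟩; exact hc ⟨h1', h2', h4', h5'⟩)]

lemma OW_unitary : (OW n W X)ᴴ * OW n W X = 1 := by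
  rw [OW_eq, liftX_conjT, liftX_mul]
  rw [show (fun x : X => (Osm n)ᴴ * Osm n) = fun _ : X => (1 : Matrix (Yb n × Ybar n) (Yb n × Ybar n) ℂ) from
    funext fun x => Osm_unitary]
  exact liftX_one


end Big

-- ### Stage 6: the measurement as controlled permutation
section BigR
variable {W X : Type*} [Fintype W] [DecidableEq W] [Fintype X] [LinearOrder X]
  [DecidableEq X] (R : X → Yb n → Prop) [∀ x, DecidablePred (R x)]

lemma prodext5 {p q : W × X × Yb n × Db n X × Ptr X} :
    p = q ↔ p.1 = q.1 ∧ p.2.1 = q.2.1 ∧ p.2.2.1 = q.2.2.1 ∧ p.2.2.2.1 = q.2.2.2.1 ∧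
      p.2.2.2.2 = q.2.2.2.2 := by
  constructor
  · rintro rfl
    exact ⟨rfl, rfl, rfl, rfl, rfl⟩
  · rintro ⟨h1, h2, h3, h4, h5⟩
    rcases p with ⟨a, b, c, d, e⟩
    rcases q with ⟨a', b', c', d', e'⟩
    simp only at h1 h2 h3 h4 h5
    subst h1 h2 h3 h4 h5
    rfl

def sigM (q : W × X × Yb n × Db n X × Ptr X) : W × X × Yb n × Db n X × Ptr X :=
  (q.1, q.2.1, q.2.2.1, q.2.2.2.1, q.2.2.2.2 + extD R q.2.2.2.1)

lemma sigM_inj : Function.Injective (sigM (W := W) R) := by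
  intro p q h
  rw [prodext5] at h
  simp only [sigM] at h
  obtain ⟨h1, h2, h3, h4, h5⟩ := h
  rw [h4] at h5
  rw [prodext5]
  exact ⟨h1, h2, h3, h4, add_right_cancel h5⟩

lemma MW_eq : MW W R = Matrix.of fun p q => if p = sigM R q then (1:ℂ) else 0 := by
  ext p q
  simp only [MW, MDP, Matrix.of_apply]
  by_cases h1 : p.1 = q.1 ∧ p.2.1 = q.2.1 ∧ p.2.2.1 = q.2.2.1
  · rw [if_pos h1]
    refine if_congr ?_ rfl rfl
    rw [Prod.mk.injEq, prodext5]
    simp only [sigM]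
    constructor
    · rintro ⟨hd, hp⟩
      exact ⟨h1.1, h1.2.1, h1.2.2, hd, hp⟩
    · rintro ⟨_, _, _, hd, hp⟩
      exact ⟨hd, hp⟩
  · rw [if_neg h1, if_neg ?hn]
    case hn =>
      intro hp
      rw [prodext5] at hp
      exact h1 ⟨hp.1, hp.2.1, hp.2.2.1⟩

lemma MW_unitary : (MW W R)ᴴ * MW W R = 1 := by
  rw [MW_eq]
  exact perm_unitary (sigM_inj R)

/-- ext with the hit-bit at x forced to b. -/
def extF (x : X) (d : Db n X) (b : Bool) : Ptr X :=
  if h : (Finset.univ.filter fun x' =>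
      (if x' = x then b else hitB R x' (d x')) = true).Nonempty then
    encodeX ((Finset.univ.filter fun x' =>
      (if x' = x then b else hitB R x' (d x')) = true).min' h)
  else 0

lemma extF_congr (x : X) {d d' : Db n X} (h : ∀ x', x' ≠ x → d x' = d' x') (b : Bool) :
    extF R x d b = extF R x d' b := by
  have hfil : (Finset.univ.filter fun x' =>
      (if x' = x then b else hitB R x' (d x')) = true)
      = (Finset.univ.filter fun x' => (if x' = x then b else hitB R x' (d' x')) = true) := by
    apply Finset.filter_congr
    intro x' _
    by_cases hx : x' = x
    · simp [hx]
    · rw [h x' hx]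
  unfold extF
  simp only [hfil]

lemma extD_eq_extF (x : X) (d : Db n X) : extD R d = extF R x d (hitB R x (d x)) := by
  have hfil : (Finset.univ.filter fun x' => hitB R x' (d x') = true)
      = (Finset.univ.filter fun x' =>
          (if x' = x then hitB R x (d x) else hitB R x' (d x')) = true) := by
    apply Finset.filter_congr
    intro x' _
    by_cases hx : x' = x
    · subst hx
      simp
    · simp [hx]
  unfold extD extF
  simp only [hfil]

def sigN (b : Bool) (q : W × X × Yb n × Db n X × Ptr X) : W × X × Yb n × Db n X × Ptr X :=
  (q.1, q.2.1, q.2.2.1, q.2.2.2.1, q.2.2.2.2 + extF R q.2.1 q.2.2.2.1 b)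

def tauN (b : Bool) (p : W × X × Yb n × Db n X × Ptr X) : W × X × Yb n × Db n X × Ptr X :=
  (p.1, p.2.1, p.2.2.1, p.2.2.2.1, p.2.2.2.2 - extF R p.2.1 p.2.2.2.1 b)

lemma tauN_sigN (b : Bool) (q : W × X × Yb n × Db n X × Ptr X) :
    tauN R b (sigN R b q) = q := by
  rw [prodext5]
  refine ⟨rfl, rfl, rfl, rfl, ?_⟩
  show q.2.2.2.2 + extF R q.2.1 q.2.2.2.1 b - extF R q.2.1 q.2.2.2.1 b = q.2.2.2.2
  rw [add_sub_cancel_right]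

lemma sigN_tauN (b : Bool) (p : W × X × Yb n × Db n X × Ptr X) :
    sigN R b (tauN R b p) = p := by
  rw [prodext5]
  refine ⟨rfl, rfl, rfl, rfl, ?_⟩
  show p.2.2.2.2 - extF R p.2.1 p.2.2.2.1 b + extF R p.2.1 p.2.2.2.1 b = p.2.2.2.2
  rw [sub_add_cancel]

lemma sigN_inj (b : Bool) : Function.Injective (sigN (W := W) R b) :=
  Function.LeftInverse.injective (tauN_sigN R b)

/-- the controlled shift N_b on the big space. -/
def Nbm (b : Bool) : Matrix (W × X × Yb n × Db n X × Ptr X) (W × X × Yb n × Db n X × Ptr X) ℂ :=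
  Matrix.of fun p q => if p = sigN R b q then 1 else 0

lemma Nbm_unitary (b : Bool) : (Nbm (W := W) R b)ᴴ * Nbm R b = 1 :=
  perm_unitary (sigN_inj R b)

lemma OW_mul_Nbm (b : Bool) : OW n W X * Nbm R b = Nbm R b * OW n W X := by
  ext p q
  rw [Matrix.mul_apply, Matrix.mul_apply]
  have hL : ∑ r, OW n W X p r * Nbm R b r q = OW n W X p (sigN R b q) := by
    rw [Finset.sum_eq_single (sigN R b q)]
    · rw [show Nbm R b (sigN R b q) q = 1 from by rw [Nbm, Matrix.of_apply, if_pos rfl],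
        mul_one]
    · intro r _ hr
      rw [show Nbm R b r q = 0 from by rw [Nbm, Matrix.of_apply, if_neg hr], mul_zero]
    · simp
  have hR : ∑ r, Nbm R b p r * OW n W X r q = OW n W X (tauN R b p) q := by
    rw [Finset.sum_eq_single (tauN R b p)]
    · rw [show Nbm R b p (tauN R b p) = 1 from by
        rw [Nbm, Matrix.of_apply, if_pos (sigN_tauN R b p).symm], one_mul]
    · intro r _ hr
      rw [show Nbm R b p r = 0 from by
        rw [Nbm, Matrix.of_apply, if_neg fun hh => hr (by rw [hh, tauN_sigN])], zero_mul]
    · simp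
  rw [hL, hR, OW_eq]
  show (if p.1 = q.1 ∧ p.2.1 = q.2.1 ∧
        p.2.2.2.2 = q.2.2.2.2 + extF R q.2.1 q.2.2.2.1 b ∧
        (∀ x', x' ≠ p.2.1 → p.2.2.2.1 x' = q.2.2.2.1 x') then
      Osm n (p.2.2.1, p.2.2.2.1 p.2.1) (q.2.2.1, q.2.2.2.1 p.2.1) else 0)
    = (if p.1 = q.1 ∧ p.2.1 = q.2.1 ∧
        p.2.2.2.2 - extF R p.2.1 p.2.2.2.1 b = q.2.2.2.2 ∧
        (∀ x', x' ≠ p.2.1 → p.2.2.2.1 x' = q.2.2.2.1 x') then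
      Osm n (p.2.2.1, p.2.2.2.1 p.2.1) (q.2.2.1, q.2.2.2.1 p.2.1) else 0)
  refine if_congr ?_ rfl rfl
  constructor
  · rintro ⟨h1, h2, h3, h4⟩
    refine ⟨h1, h2, ?_, h4⟩
    have hE : extF R p.2.1 p.2.2.2.1 b = extF R q.2.1 q.2.2.2.1 b := by
      rw [h2]
      exact extF_congr R q.2.1 (fun x' hx' => h4 x' (by rw [h2]; exact hx')) b
    rw [h3, hE, add_sub_cancel_right]
  · rintro ⟨h1, h2, h3, h4⟩
    refine ⟨h1, h2, ?_, h4⟩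
    have hE : extF R p.2.1 p.2.2.2.1 b = extF R q.2.1 q.2.2.2.1 b := by
      rw [h2]
      exact extF_congr R q.2.1 (fun x' hx' => h4 x' (by rw [h2]; exact hx')) b
    rw [← h3, hE, sub_add_cancel]

lemma Qb_diag : liftD n W (fun x : X => Pix R x)
    = Matrix.diagonal (fun p : W × X × Yb n × Db n X × Ptr X =>
        if hitB R p.2.1 (p.2.2.2.1 p.2.1) then (1:ℂ) else 0) := by
  ext p q
  simp only [liftD, Matrix.of_apply, Pix]
  by_cases hpq : p = q
  · subst hpq
    rw [if_pos ⟨rfl, rfl, rfl, rfl, fun _ _ => rfl⟩, Matrix.diagonal_apply_eq,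
      Matrix.diagonal_apply_eq]
  · rw [Matrix.diagonal_apply_ne _ hpq]
    by_cases hc : p.1 = q.1 ∧ p.2.1 = q.2.1 ∧ p.2.2.1 = q.2.2.1 ∧ p.2.2.2.2 = q.2.2.2.2 ∧
        (∀ x', x' ≠ p.2.1 → p.2.2.2.1 x' = q.2.2.2.1 x')
    · rw [if_pos hc]
      by_cases hd : p.2.2.2.1 p.2.1 = q.2.2.2.1 p.2.1
      · exfalso
        apply hpq
        rw [prodext5]
        refine ⟨hc.1, hc.2.1, hc.2.2.1, ?_, hc.2.2.2.1⟩
        funext z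
        by_cases hz : z = p.2.1
        · subst hz; exact hd
        · exact hc.2.2.2.2 z hz
      · rw [Matrix.diagonal_apply_ne _ hd]
    · rw [if_neg hc]

lemma Nbm_mul_diag (b : Bool) (dv : W × X × Yb n × Db n X × Ptr X → ℂ)
    (p q : W × X × Yb n × Db n X × Ptr X) :
    (Nbm (W := W) R b * Matrix.diagonal dv) p q = (if p = sigN R b q then dv q else 0) := by
  rw [Matrix.mul_diagonal]
  simp only [Nbm, Matrix.of_apply, ite_mul, one_mul, zero_mul]

lemma MW_decomp : MW W R = Nbm R true * liftD n W (fun x : X => Pix R x)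
    + Nbm R false * (1 - liftD n W (fun x : X => Pix R x)) := by
  rw [Qb_diag, MW_eq]
  have h1 : (1 : Matrix (W × X × Yb n × Db n X × Ptr X) (W × X × Yb n × Db n X × Ptr X) ℂ)
      - Matrix.diagonal (fun p => if hitB R p.2.1 (p.2.2.2.1 p.2.1) then (1:ℂ) else 0)
      = Matrix.diagonal (fun p => 1 - if hitB R p.2.1 (p.2.2.2.1 p.2.1) then (1:ℂ) else 0) := by
    rw [← Matrix.diagonal_one, Matrix.diagonal_sub]
  rw [h1]
  ext p q
  rw [Matrix.add_apply, Nbm_mul_diag, Nbm_mul_diag, Matrix.of_apply]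
  by_cases hq : hitB R q.2.1 (q.2.2.2.1 q.2.1)
  · have hsig : sigM R q = sigN R true q := by
      rw [prodext5]
      refine ⟨rfl, rfl, rfl, rfl, ?_⟩
      show q.2.2.2.2 + extD R q.2.2.2.1 = q.2.2.2.2 + extF R q.2.1 q.2.2.2.1 true
      rw [extD_eq_extF R q.2.1, hq]
    rw [hsig, if_pos hq]
    by_cases hp2 : p = sigN R false q
    · rw [if_pos hp2]
      ring
    · rw [if_neg hp2]
      ring
  · have hq' : hitB R q.2.1 (q.2.2.2.1 q.2.1) = false := by
      simpa using hq
    have hsig : sigM R q = sigN R false q := by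
      rw [prodext5]
      refine ⟨rfl, rfl, rfl, rfl, ?_⟩
      show q.2.2.2.2 + extD R q.2.2.2.1 = q.2.2.2.2 + extF R q.2.1 q.2.2.2.1 false
      rw [extD_eq_extF R q.2.1, hq']
    rw [hsig, if_neg hq]
    by_cases hp2 : p = sigN R true q
    · rw [if_pos hp2]
      ring
    · rw [if_neg hp2]
      ring

lemma comm_decomp :
    OW n W X * MW W R - MW W R * OW n W X
      = (Nbm R true - Nbm R false) *
          (OW n W X * liftD n W (fun x : X => Pix R x)
            - liftD n W (fun x : X => Pix R x) * OW n W X) := by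
  set O := OW n W X
  set T := Nbm (W := W) R true
  set F' := Nbm (W := W) R false
  set Q := liftD n W (fun x : X => Pix R x)
  have hT : O * T = T * O := OW_mul_Nbm R true
  have hF : O * F' = F' * O := OW_mul_Nbm R false
  have hM : MW W R = T * Q + F' * (1 - Q) := MW_decomp R
  have e1 : O * (T * Q) = T * (O * Q) := by rw [← mul_assoc, hT, mul_assoc]
  have e2 : O * (F' * (1 - Q)) = F' * O - F' * (O * Q) := by
    rw [← mul_assoc, hF, mul_assoc, mul_sub, mul_one, mul_sub]
  have e3 : T * Q * O = T * (Q * O) := mul_assoc _ _ _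
  have e4 : F' * (1 - Q) * O = F' * O - F' * (Q * O) := by
    rw [mul_assoc, sub_mul, one_mul, mul_sub]
  rw [hM, mul_add, add_mul, e1, e2, e3, e4, sub_mul, mul_sub, mul_sub]
  abel

lemma commQ_eq :
    OW n W X * liftD n W (fun x : X => Pix R x)
      - liftD n W (fun x : X => Pix R x) * OW n W X
    = liftX n W (fun _ : X => ((1 : Matrix (Yb n) (Yb n) ℂ) ⊗ₖ Fmat n) * CNOTmat n)
        * liftD n W (fun x => Fmat n * Pix R x - Pix R x * Fmat n)
      + liftD n W (fun x => Fmat n * Pix R x - Pix R x * Fmat n)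
        * liftX n W (fun _ : X => CNOTmat n * ((1 : Matrix (Yb n) (Yb n) ℂ) ⊗ₖ Fmat n)) := by
  have hL : OW n W X * liftD n W (fun x : X => Pix R x)
      - liftD n W (fun x : X => Pix R x) * OW n W X
      = liftX n W (fun x : X => Osm n * ((1 : Matrix (Yb n) (Yb n) ℂ) ⊗ₖ Pix R x)
          - ((1 : Matrix (Yb n) (Yb n) ℂ) ⊗ₖ Pix R x) * Osm n) := by
    rw [liftX_sub, OW_eq, ← liftX_kron_one (fun x : X => Pix R x), liftX_mul, liftX_mul]
  have hR1 : liftX n W (fun _ : X => ((1 : Matrix (Yb n) (Yb n) ℂ) ⊗ₖ Fmat n) * CNOTmat n)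
        * liftD n W (fun x => Fmat n * Pix R x - Pix R x * Fmat n)
      = liftX n W (fun x : X => (((1 : Matrix (Yb n) (Yb n) ℂ) ⊗ₖ Fmat n) * CNOTmat n)
          * ((1 : Matrix (Yb n) (Yb n) ℂ) ⊗ₖ (Fmat n * Pix R x - Pix R x * Fmat n))) := by
    rw [← liftX_kron_one (fun x : X => Fmat n * Pix R x - Pix R x * Fmat n), liftX_mul]
  have hR2 : liftD n W (fun x => Fmat n * Pix R x - Pix R x * Fmat n)
        * liftX n W (fun _ : X => CNOTmat n * ((1 : Matrix (Yb n) (Yb n) ℂ) ⊗ₖ Fmat n))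
      = liftX n W (fun x : X =>
          ((1 : Matrix (Yb n) (Yb n) ℂ) ⊗ₖ (Fmat n * Pix R x - Pix R x * Fmat n))
          * (CNOTmat n * ((1 : Matrix (Yb n) (Yb n) ℂ) ⊗ₖ Fmat n))) := by
    rw [← liftX_kron_one (fun x : X => Fmat n * Pix R x - Pix R x * Fmat n), liftX_mul]
  rw [hL, hR1, hR2, ← liftX_add]
  refine congrArg (fun (f : X → Matrix (Yb n × Ybar n) (Yb n × Ybar n) ℂ) =>
    liftX n W f) (funext fun x => ?_)
  have h := Osm_comm (X := X) R x
  have hk : (1 : Matrix (Yb n) (Yb n) ℂ) ⊗ₖ (Fmat n * Pix R x - Pix R x * Fmat n)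
      = (1 : Matrix (Yb n) (Yb n) ℂ) ⊗ₖ Fmat n * ((1 : Matrix (Yb n) (Yb n) ℂ) ⊗ₖ Pix R x)
        - ((1 : Matrix (Yb n) (Yb n) ℂ) ⊗ₖ Pix R x)
          * ((1 : Matrix (Yb n) (Yb n) ℂ) ⊗ₖ Fmat n) := by
    rw [← Matrix.mul_kronecker_mul, ← Matrix.mul_kronecker_mul, one_mul, kron_one_sub]
  rw [hk, h, hk]
  rw [mul_assoc ((1 : Matrix (Yb n) (Yb n) ℂ) ⊗ₖ Fmat n) (CNOTmat n), ← mul_assoc, ← mul_assoc]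

/-- entry formula for liftD applied to a vector. -/
lemma liftD_entry (B : X → Matrix (Ybar n) (Ybar n) ℂ) (ψ : W × X × Yb n × Db n X × Ptr X → ℂ)
    (p : W × X × Yb n × Db n X × Ptr X) :
    (liftD n W B).mulVec ψ p
      = ((B p.2.1).mulVec (fun α => ψ (p.1, p.2.1, p.2.2.1,
          Function.update p.2.2.2.1 p.2.1 α, p.2.2.2.2))) (p.2.2.2.1 p.2.1) := by
  have hinj : Function.Injective (fun α : Ybar n =>
      ((p.1, p.2.1, p.2.2.1, Function.update p.2.2.2.1 p.2.1 α, p.2.2.2.2) :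
        W × X × Yb n × Db n X × Ptr X)) := by
    intro a b h
    have := congrArg (fun r => r.2.2.2.1 p.2.1) h
    simpa [Function.update_self] using this
  show (fun j => liftD n W B p j) ⬝ᵥ ψ = _
  rw [dotProduct]
  rw [sum_collapse hinj _ ?h0]
  case h0 =>
    intro r hr
    by_cases hc : p.1 = r.1 ∧ p.2.1 = r.2.1 ∧ p.2.2.1 = r.2.2.1 ∧ p.2.2.2.2 = r.2.2.2.2 ∧
        (∀ x', x' ≠ p.2.1 → p.2.2.2.1 x' = r.2.2.2.1 x')
    · exfalso
      apply hr (r.2.2.2.1 p.2.1)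
      rw [prodext5]
      refine ⟨hc.1.symm, hc.2.1.symm, hc.2.2.1.symm, ?_, hc.2.2.2.1.symm⟩
      show r.2.2.2.1 = Function.update p.2.2.2.1 p.2.1 (r.2.2.2.1 p.2.1)
      funext z
      by_cases hz : z = p.2.1
      · subst hz
        rw [Function.update_self]
      · rw [Function.update_of_ne hz]
        exact (hc.2.2.2.2 z hz).symm
    · rw [show liftD n W B p r = 0 from by rw [liftD, Matrix.of_apply, if_neg hc], zero_mul]
  rw [Matrix.mulVec, dotProduct]
  refine Finset.sum_congr rfl fun α _ => ?_
  congr 1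
  rw [liftD, Matrix.of_apply, if_pos ?hc2]
  case hc2 =>
    refine ⟨rfl, rfl, rfl, rfl, fun x' hx' => ?_⟩
    show p.2.2.2.1 x' = Function.update p.2.2.2.1 p.2.1 α x'
    rw [Function.update_of_ne hx']
  show B p.2.1 (p.2.2.2.1 p.2.1) (Function.update p.2.2.2.1 p.2.1 α p.2.1) = _
  rw [Function.update_self]

lemma sum_split_at (x : X) (g : Db n X → ℝ) :
    ∑ d, g d = ∑ e : {x' // x' ≠ x} → Ybar n, ∑ α,
      g ((Equiv.funSplitAt x (Ybar n)).symm (α, e)) := by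
  rw [← Equiv.sum_comp (Equiv.funSplitAt x (Ybar n)).symm g, Fintype.sum_prod_type]
  exact Finset.sum_comm

lemma update_splitAt (x : X) (α α' : Ybar n) (e : {x' // x' ≠ x} → Ybar n) :
    Function.update ((Equiv.funSplitAt x (Ybar n)).symm (α, e)) x α'
      = (Equiv.funSplitAt x (Ybar n)).symm (α', e) := by
  funext z
  by_cases hz : z = x
  · subst hz
    rw [Function.update_self, Equiv.funSplitAt_symm_apply, dif_pos rfl]
  · rw [Function.update_of_ne hz, Equiv.funSplitAt_symm_apply,
      Equiv.funSplitAt_symm_apply, dif_neg hz, dif_neg hz]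

lemma liftD_bound (B : X → Matrix (Ybar n) (Ybar n) ℂ) (C : ℝ) (hC : 0 ≤ C)
    (hB : ∀ (x : X) (t : Ybar n → ℂ), vnorm ((B x).mulVec t) ≤ C * vnorm t)
    (ψ : W × X × Yb n × Db n X × Ptr X → ℂ) :
    vnorm ((liftD n W B).mulVec ψ) ≤ C * vnorm ψ := by
  have hsq : ∀ (x : X) (t : Ybar n → ℂ),
      (∑ α, ‖(B x).mulVec t α‖ ^ 2) ≤ C^2 * ∑ α, ‖t α‖ ^ 2 := by
    intro x t
    have h := hB x t
    unfold vnorm at h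
    have h1 : (0:ℝ) ≤ ∑ α, ‖(B x).mulVec t α‖ ^ 2 :=
      Finset.sum_nonneg fun _ _ => sq_nonneg _
    have h2 : (0:ℝ) ≤ ∑ α, ‖t α‖ ^ 2 :=
      Finset.sum_nonneg fun _ _ => sq_nonneg _
    have h3 := mul_self_le_mul_self (Real.sqrt_nonneg _) h
    rw [Real.mul_self_sqrt h1] at h3
    calc (∑ α, ‖(B x).mulVec t α‖ ^ 2)
        ≤ (C * Real.sqrt (∑ α, ‖t α‖ ^ 2))
          * (C * Real.sqrt (∑ α, ‖t α‖ ^ 2)) := h3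
      _ = C^2 * ∑ α, ‖t α‖ ^ 2 := by
          rw [show (C * Real.sqrt (∑ α, ‖t α‖ ^ 2))
              * (C * Real.sqrt (∑ α, ‖t α‖ ^ 2))
              = C^2 * (Real.sqrt (∑ α, ‖t α‖ ^ 2)
                * Real.sqrt (∑ α, ‖t α‖ ^ 2)) by ring,
            Real.mul_self_sqrt h2]
  unfold vnorm
  rw [show C * Real.sqrt (∑ i, ‖ψ i‖ ^ 2)
      = Real.sqrt (C^2 * ∑ i, ‖ψ i‖ ^ 2) by
    rw [Real.sqrt_mul (sq_nonneg C), Real.sqrt_sq hC]]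
  apply Real.sqrt_le_sqrt
  -- expand the index product
  calc ∑ p, ‖(liftD n W B).mulVec ψ p‖ ^ 2
      = ∑ w, ∑ x, ∑ y, ∑ pi, ∑ d, ‖
          (liftD n W B).mulVec ψ (w, x, y, d, pi)‖ ^ 2 := by
        rw [Fintype.sum_prod_type]
        refine Finset.sum_congr rfl fun w _ => ?_
        rw [Fintype.sum_prod_type]
        refine Finset.sum_congr rfl fun x _ => ?_
        rw [Fintype.sum_prod_type]
        refine Finset.sum_congr rfl fun y _ => ?_
        rw [Fintype.sum_prod_type]
        exact Finset.sum_comm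
    _ ≤ ∑ w, ∑ x, ∑ y, ∑ pi, ∑ d, C^2 * ‖ψ (w, x, y, d, pi)‖ ^ 2 := by
        refine Finset.sum_le_sum fun w _ => Finset.sum_le_sum fun x _ =>
          Finset.sum_le_sum fun y _ => Finset.sum_le_sum fun pi _ => ?_
        rw [sum_split_at x, sum_split_at x
          (fun d => C^2 * ‖ψ (w, x, y, d, pi)‖ ^ 2)]
        refine Finset.sum_le_sum fun e _ => ?_
        have hentry : ∀ α, (liftD n W B).mulVec ψ
            (w, x, y, (Equiv.funSplitAt x (Ybar n)).symm (α, e), pi)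
            = (B x).mulVec (fun α' => ψ (w, x, y,
                (Equiv.funSplitAt x (Ybar n)).symm (α', e), pi)) α := by
          intro α
          rw [liftD_entry]
          have hx : (Equiv.funSplitAt x (Ybar n)).symm (α, e) x = α := by
            rw [Equiv.funSplitAt_symm_apply, dif_pos rfl]
          show (B x).mulVec (fun α' => ψ (w, x, y, Function.update
              ((Equiv.funSplitAt x (Ybar n)).symm (α, e)) x α', pi))
              ((Equiv.funSplitAt x (Ybar n)).symm (α, e) x)
            = (B x).mulVec (fun α' => ψ (w, x, y,
              (Equiv.funSplitAt x (Ybar n)).symm (α', e), pi)) α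
          rw [show (fun α' => ψ (w, x, y, Function.update
                ((Equiv.funSplitAt x (Ybar n)).symm (α, e)) x α', pi))
              = fun α' => ψ (w, x, y, (Equiv.funSplitAt x (Ybar n)).symm (α', e), pi) from
            funext fun α' => by rw [update_splitAt], hx]
        calc ∑ α, ‖(liftD n W B).mulVec ψ
              (w, x, y, (Equiv.funSplitAt x (Ybar n)).symm (α, e), pi)‖ ^ 2
            = ∑ α, ‖(B x).mulVec (fun α' => ψ (w, x, y,
                (Equiv.funSplitAt x (Ybar n)).symm (α', e), pi)) α‖ ^ 2 := by
              exact Finset.sum_congr rfl fun α _ => by rw [hentry]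
          _ ≤ C^2 * ∑ α, ‖ψ (w, x, y,
                (Equiv.funSplitAt x (Ybar n)).symm (α, e), pi)‖ ^ 2 := hsq x _
          _ = ∑ α, C^2 * ‖ψ (w, x, y,
                (Equiv.funSplitAt x (Ybar n)).symm (α, e), pi)‖ ^ 2 := Finset.mul_sum _ _ _
    _ = C^2 * ∑ p, ‖ψ p‖ ^ 2 := by
        rw [Finset.mul_sum]
        rw [Fintype.sum_prod_type]
        refine Finset.sum_congr rfl fun w _ => ?_
        rw [Fintype.sum_prod_type]
        refine Finset.sum_congr rfl fun x _ => ?_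
        rw [Fintype.sum_prod_type]
        refine Finset.sum_congr rfl fun y _ => ?_
        rw [Fintype.sum_prod_type]
        exact Finset.sum_comm

end BigR

end S12

-- STATEMENT 12
theorem stmt12 (n : ℕ) {W X : Type*} [Fintype X] [LinearOrder X] [DecidableEq X] [Nonempty X]
    [Fintype W] [DecidableEq W] [Nonempty W]
    (R : X → Yb n → Prop) [∀ x, DecidablePred (R x)]
    (ψ : W × X × Yb n × Db n X × Ptr X → ℂ)
    (hψ : ∑ i, ‖ψ i‖ ^ 2 = 1)
    (hΔ : (Matrix.vecMulVec ((OW n W X * MW W R).mulVec ψ)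
              (star ((OW n W X * MW W R).mulVec ψ)) -
           Matrix.vecMulVec ((MW W R * OW n W X).mulVec ψ)
              (star ((MW W R * OW n W X).mulVec ψ))).IsHermitian) :
    (1 / 2) * ∑ i, |hΔ.eigenvalues i| ≤
      8 * (2 : ℝ) ^ (-(n : ℝ) / 2) * Real.sqrt (2 * (GamR R : ℝ)) := by
  classical
  have hψ1 : vnorm ψ = 1 := by
    unfold vnorm
    rw [hψ, Real.sqrt_one]
  have hOW := S12.OW_unitary (n := n) (W := W) (X := X)
  have hMW := S12.MW_unitary (W := W) R
  have hUnorm : vnorm ((OW n W X * MW W R).mulVec ψ) = 1 := by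
    rw [S12.vnorm_mulVec_of_unitary (S12.unitary_mul hOW hMW), hψ1]
  have hVnorm : vnorm ((MW W R * OW n W X).mulVec ψ) = 1 := by
    rw [S12.vnorm_mulVec_of_unitary (S12.unitary_mul hMW hOW), hψ1]
  have heig := S12.eig_sum_bound hΔ ((OW n W X * MW W R).mulVec ψ)
    ((MW W R * OW n W X).mulVec ψ)
    ((OW n W X * MW W R).mulVec ψ - (MW W R * OW n W X).mulVec ψ)
    (S12.splitDelta _ _)
  -- commutator norm bound
  set Qd := S12.liftD n W (fun x : X => Pix R x) with hQd
  set Em := S12.liftD n W (fun x : X => Fmat n * Pix R x - Pix R x * Fmat n) with hEm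
  set C : ℝ := 2 * (Real.sqrt (GamR R) * cst n) * Real.sqrt 2 with hCdef
  have hC0 : 0 ≤ C := by
    rw [hCdef]
    have := S12.cst_pos (n := n)
    positivity
  have hEb : ∀ t, vnorm (Em.mulVec t) ≤ C * vnorm t := by
    intro t
    rw [hEm]
    exact S12.liftD_bound _ C hC0 (fun x s => S12.smallE_bound R x s) t
  -- z bound
  set z := (OW n W X * Qd - Qd * OW n W X).mulVec ψ with hz
  have hA1 : (S12.liftX n W (fun _ : X => ((1 : Matrix (Yb n) (Yb n) ℂ) ⊗ₖ Fmat n) * CNOTmat n))ᴴ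
      * S12.liftX n W (fun _ : X => ((1 : Matrix (Yb n) (Yb n) ℂ) ⊗ₖ Fmat n) * CNOTmat n) = 1 := by
    rw [S12.liftX_conjT, S12.liftX_mul]
    rw [show (fun x : X => (((1 : Matrix (Yb n) (Yb n) ℂ) ⊗ₖ Fmat n) * CNOTmat n)ᴴ
        * (((1 : Matrix (Yb n) (Yb n) ℂ) ⊗ₖ Fmat n) * CNOTmat n))
      = fun _ : X => (1 : Matrix (Yb n × Ybar n) (Yb n × Ybar n) ℂ) from
      funext fun x => S12.unitary_mul S12.Fsm_unitary S12.Csm_unitary]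
    exact S12.liftX_one
  have hA2 : (S12.liftX n W (fun _ : X => CNOTmat n * ((1 : Matrix (Yb n) (Yb n) ℂ) ⊗ₖ Fmat n)))ᴴ
      * S12.liftX n W (fun _ : X => CNOTmat n * ((1 : Matrix (Yb n) (Yb n) ℂ) ⊗ₖ Fmat n)) = 1 := by
    rw [S12.liftX_conjT, S12.liftX_mul]
    rw [show (fun x : X => (CNOTmat n * ((1 : Matrix (Yb n) (Yb n) ℂ) ⊗ₖ Fmat n))ᴴ
        * (CNOTmat n * ((1 : Matrix (Yb n) (Yb n) ℂ) ⊗ₖ Fmat n)))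
      = fun _ : X => (1 : Matrix (Yb n × Ybar n) (Yb n × Ybar n) ℂ) from
      funext fun x => S12.unitary_mul S12.Csm_unitary S12.Fsm_unitary]
    exact S12.liftX_one
  have hzb : vnorm z ≤ 2 * C := by
    rw [hz, S12.commQ_eq R, Matrix.add_mulVec, ← Matrix.mulVec_mulVec, ← Matrix.mulVec_mulVec]
    refine (S12.vnorm_add_le _ _).trans ?_
    have t1 : vnorm ((S12.liftX n W (fun _ : X =>
        ((1 : Matrix (Yb n) (Yb n) ℂ) ⊗ₖ Fmat n) * CNOTmat n)).mulVec (Em.mulVec ψ))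
        ≤ C := by
      rw [S12.vnorm_mulVec_of_unitary hA1]
      calc vnorm (Em.mulVec ψ) ≤ C * vnorm ψ := hEb ψ
        _ = C := by rw [hψ1, mul_one]
    have t2 : vnorm (Em.mulVec ((S12.liftX n W (fun _ : X =>
        CNOTmat n * ((1 : Matrix (Yb n) (Yb n) ℂ) ⊗ₖ Fmat n))).mulVec ψ)) ≤ C := by
      calc vnorm (Em.mulVec _) ≤ C * vnorm ((S12.liftX n W (fun _ : X =>
            CNOTmat n * ((1 : Matrix (Yb n) (Yb n) ℂ) ⊗ₖ Fmat n))).mulVec ψ) := hEb _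
        _ = C := by rw [S12.vnorm_mulVec_of_unitary hA2, hψ1, mul_one]
    calc vnorm _ + vnorm _ ≤ C + C := add_le_add t1 t2
      _ = 2 * C := by ring
  -- w bound
  have hwb : vnorm ((OW n W X * MW W R).mulVec ψ - (MW W R * OW n W X).mulVec ψ) ≤ 4 * C := by
    have hcomm : (OW n W X * MW W R).mulVec ψ - (MW W R * OW n W X).mulVec ψ
        = ((S12.Nbm R true - S12.Nbm R false) *
        (OW n W X * Qd - Qd * OW n W X)).mulVec ψ := by
      rw [← Matrix.sub_mulVec, S12.comm_decomp R, hQd]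
    rw [hcomm, ← Matrix.mulVec_mulVec, Matrix.sub_mulVec]
    refine (S12.vnorm_sub_le _ _).trans ?_
    have n1 : vnorm ((S12.Nbm R true).mulVec z) ≤ 2 * C := by
      rw [S12.vnorm_mulVec_of_unitary (S12.Nbm_unitary R true)]
      exact hzb
    have n2 : vnorm ((S12.Nbm R false).mulVec z) ≤ 2 * C := by
      rw [S12.vnorm_mulVec_of_unitary (S12.Nbm_unitary R false)]
      exact hzb
    calc vnorm _ + vnorm _ ≤ 2 * C + 2 * C := add_le_add n1 n2
      _ = 4 * C := by ring
  -- final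
  have hfin : (1 / 2) * ∑ i, |hΔ.eigenvalues i| ≤ 4 * C := by
    calc (1 / 2) * ∑ i, |hΔ.eigenvalues i|
        ≤ (1 / 2) * (vnorm ((OW n W X * MW W R).mulVec ψ - (MW W R * OW n W X).mulVec ψ)
            * (vnorm ((OW n W X * MW W R).mulVec ψ) + vnorm ((MW W R * OW n W X).mulVec ψ))) := by
          refine mul_le_mul_of_nonneg_left heig (by norm_num)
      _ = vnorm ((OW n W X * MW W R).mulVec ψ - (MW W R * OW n W X).mulVec ψ) := by
          rw [hUnorm, hVnorm]; ring
      _ ≤ 4 * C := hwb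
  refine hfin.trans (le_of_eq ?_)
  rw [hCdef]
  have hsqrt : Real.sqrt (2 * (GamR R : ℝ)) = Real.sqrt 2 * Real.sqrt (GamR R) :=
    Real.sqrt_mul (by norm_num) _
  rw [hsqrt]
  unfold cst
  ring

end
end

section
/- For every x ∈ X, the operator norm of (1 − Π^x)·F·Π^x on ℂ^Ȳ is at most 2^{−n/2}·√(2·Γ_x); consequently, for every unit vector ψ ∈ ℂ^Ȳ with Π^x ψ = ψ, one has ‖(1 − Π^x)·F·ψ‖² ≤ 2·Γ_x/2^n. -/
open scoped Matrix Kronecker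

noncomputable section

-- ===== auxiliary material for stmt14 =====
namespace Aux14

open Matrix

variable {n : ℕ}

def sgnB (b : Bool) : ℂ := if b then -1 else 1

lemma signDot_eq_prod (η y : Yb n) : signDot η y = ∏ i, sgnB (η i && y i) := by
  unfold signDot sgnB
  rw [Finset.prod_ite, Finset.prod_const, Finset.prod_const, one_pow, mul_one]

lemma sgnB_mul (a b : Bool) : sgnB a * sgnB b = sgnB (xor a b) := by
  cases a <;> cases b <;> simp [sgnB]

lemma signDot_zero_right (η : Yb n) : signDot η (fun _ => false) = 1 := by
  simp [signDot_eq_prod, sgnB]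

lemma signDot_zero_left (y : Yb n) : signDot (fun _ => false) y = 1 := by
  simp [signDot_eq_prod, sgnB]

lemma sum_signDot (w : Yb n) :
    (∑ y : Yb n, signDot w y) = if w = (fun _ => false) then ((2:ℂ)^n) else 0 := by
  simp only [signDot_eq_prod]
  rw [← Fintype.prod_sum fun (i : Fin n) (b : Bool) => sgnB (w i && b)]
  by_cases h : w = fun _ => false
  · rw [if_pos h]
    subst h
    simp [sgnB, Finset.prod_const]
  · rw [if_neg h]
    obtain ⟨i, hi⟩ : ∃ i, w i = true := by
      by_contra hc; push_neg at hc
      exact h (funext fun i => by simpa using hc i)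
    refine Finset.prod_eq_zero (Finset.mem_univ i) ?_
    simp [hi, sgnB]

lemma signDot_mul (z y y' : Yb n) :
    signDot z y * signDot y y' = signDot (xorY z y') y := by
  rw [signDot_eq_prod, signDot_eq_prod, signDot_eq_prod, ← Finset.prod_mul_distrib]
  refine Finset.prod_congr rfl fun i _ => ?_
  rw [sgnB_mul]
  congr 1
  show xor (z i && y i) (y i && y' i) = (xorY z y' i && y i)
  unfold xorY
  cases z i <;> cases y i <;> cases y' i <;> rfl

lemma xorY_eq_zero (z y' : Yb n) : (xorY z y' = fun _ => false) ↔ z = y' := by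
  constructor
  · intro h; funext i
    have := congrFun h i
    cases hz : z i <;> cases hy : y' i <;> simp_all [xorY]
  · rintro rfl; funext i; simp [xorY]

lemma cst_pos : 0 < cst n := Real.rpow_pos_of_pos (by norm_num) _

lemma cst_sq : (cst n) ^ 2 = (2:ℝ) ^ (-(n:ℝ)) := by
  unfold cst
  rw [← Real.rpow_natCast ((2:ℝ) ^ (-(n:ℝ)/2)) 2, ← Real.rpow_mul (by norm_num)]
  norm_num

lemma cst_sq_mul : (cst n) ^ 2 * 2 ^ n = 1 := by
  rw [cst_sq, ← Real.rpow_natCast 2 n, ← Real.rpow_add (by norm_num)]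
  simp

lemma cst_sq_mul_c : ((cst n : ℂ)) ^ 2 * 2 ^ n = 1 := by
  have := cst_sq_mul (n := n)
  calc ((cst n : ℂ)) ^ 2 * 2 ^ n = (((cst n ^ 2 * 2 ^ n : ℝ)) : ℂ) := by push_cast; ring
  _ = 1 := by rw [this]; norm_num

end Aux14


namespace Aux14

lemma Fmat_eq_sum (a b : Ybar n) :
    Fmat n a b = ∑ d, Hbar n a (swapBot n d) * Hbar n d b := by
  unfold Fmat
  rw [Matrix.mul_apply]
  refine Finset.sum_congr rfl fun d _ => ?_
  congr 1
  rw [Matrix.mul_apply]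
  simp only [Sswap, Matrix.of_apply, mul_ite, mul_one, mul_zero]
  simp

lemma Hbar_none_right (a : Ybar n) :
    Hbar n a none = Option.casesOn a 1 (fun _ => 0) := by
  cases a <;> rfl

lemma Hbar_none_some (y : Yb n) : Hbar n none (some y) = 0 := rfl

lemma Hbar_some_some (z y : Yb n) :
    Hbar n (some z) (some y) = (cst n : ℂ) * signDot z y := rfl

lemma swapBot_none : swapBot n none = some (fun _ => false) := rfl

lemma swapBot_some (y : Yb n) :
    swapBot n (some y) = if y = (fun _ => false) then none else some y := rfl

lemma Fmat_none_none : Fmat n none none = 0 := by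
  rw [Fmat_eq_sum, Fintype.sum_option]
  simp [Hbar_none_right, swapBot_none, Hbar_none_some]

lemma Fmat_some_none (z : Yb n) : Fmat n (some z) none = (cst n : ℂ) := by
  rw [Fmat_eq_sum, Fintype.sum_option]
  simp [Hbar_none_right, swapBot_none, Hbar_some_some, signDot_zero_right]

lemma Fmat_none_some (y' : Yb n) : Fmat n none (some y') = (cst n : ℂ) := by
  rw [Fmat_eq_sum, Fintype.sum_option]
  have h1 : Hbar n none (swapBot n none) * Hbar n none (some y') = 0 := by
    simp [Hbar_none_some]
  rw [h1, zero_add]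
  have h2 : ∀ y : Yb n, Hbar n none (swapBot n (some y)) * Hbar n (some y) (some y')
      = if y = (fun _ => false) then (cst n : ℂ) * signDot y y' else 0 := by
    intro y
    rw [swapBot_some, Hbar_some_some]
    by_cases hy : y = (fun _ => false)
    · rw [if_pos hy, if_pos hy]
      show (1 : ℂ) * _ = _
      rw [one_mul]
    · rw [if_neg hy, if_neg hy]
      show (0 : ℂ) * _ = 0
      rw [zero_mul]
  rw [Finset.sum_congr rfl fun y _ => h2 y, Finset.sum_ite_eq' Finset.univ]
  simp [signDot_zero_left]

lemma Fmat_some_some (z y' : Yb n) :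
    Fmat n (some z) (some y') = (if z = y' then 1 else 0) - (cst n : ℂ) ^ 2 := by
  rw [Fmat_eq_sum, Fintype.sum_option]
  have h1 : Hbar n (some z) (swapBot n none) * Hbar n none (some y') = 0 := by
    simp [Hbar_none_some]
  rw [h1, zero_add]
  have h2 : ∀ y : Yb n, Hbar n (some z) (swapBot n (some y)) * Hbar n (some y) (some y')
      = (cst n : ℂ) ^ 2 * signDot (xorY z y') y
        - (if y = (fun _ => false) then (cst n : ℂ) ^ 2 * signDot (xorY z y') y else 0) := by
    intro y
    rw [swapBot_some, Hbar_some_some]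
    by_cases hy : y = (fun _ => false)
    · rw [if_pos hy, if_pos hy, sub_self]
      show Hbar n (some z) none * _ = 0
      rw [Hbar_none_right]
      show (0 : ℂ) * _ = 0
      rw [zero_mul]
    · rw [if_neg hy, if_neg hy, sub_zero, Hbar_some_some]
      rw [show (cst n : ℂ) * signDot z y * ((cst n : ℂ) * signDot y y')
          = (cst n : ℂ) ^ 2 * (signDot z y * signDot y y') by ring, signDot_mul]
  rw [Finset.sum_congr rfl fun y _ => h2 y, Finset.sum_sub_distrib,
    Finset.sum_ite_eq' Finset.univ, ← Finset.mul_sum, sum_signDot]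
  simp only [Finset.mem_univ, if_true, signDot_zero_right, mul_one]
  by_cases hz : z = y'
  · rw [if_pos hz, if_pos ((xorY_eq_zero z y').mpr hz), cst_sq_mul_c]
  · rw [if_neg hz, if_neg (fun h => hz ((xorY_eq_zero z y').mp h)), mul_zero, zero_sub]

end Aux14


namespace Aux14

variable {X : Type*} [Fintype X]

def uVec (R : X → Yb n → Prop) [∀ x, DecidablePred (R x)] (x : X) : Ybar n → ℂ :=
  fun a => Option.casesOn a 1 fun z => -(cst n : ℂ) * (if R x z then 0 else 1)

def vVec (R : X → Yb n → Prop) [∀ x, DecidablePred (R x)] (x : X) : Ybar n → ℂ :=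
  fun a => Option.casesOn a 0 fun y => (cst n : ℂ) * (if R x y then 1 else 0)

lemma M_eq (R : X → Yb n → Prop) [∀ x, DecidablePred (R x)] (x : X) :
    ((1 : Matrix (Ybar n) (Ybar n) ℂ) - Pix R x) * Fmat n * Pix R x
      = Matrix.vecMulVec (uVec R x) (vVec R x) := by
  have h1 : (1 : Matrix (Ybar n) (Ybar n) ℂ) - Pix R x
      = Matrix.diagonal (fun a => 1 - if hitB R x a then 1 else 0) := by
    rw [Pix, ← Matrix.diagonal_one, Matrix.diagonal_sub]
  ext a b
  rw [h1, Pix, Matrix.mul_diagonal, Matrix.diagonal_mul, Matrix.vecMulVec_apply]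
  cases b with
  | none =>
    have : hitB R x (none : Ybar n) = false := rfl
    rw [this]
    simp [vVec]
  | some y' =>
    have hb : hitB R x (some y') = decide (R x y') := rfl
    by_cases hy : R x y'
    · rw [hb, decide_eq_true hy, if_pos rfl]
      cases a with
      | none =>
        have : hitB R x (none : Ybar n) = false := rfl
        rw [this, Fmat_none_some]
        simp [uVec, vVec, hy]
      | some z =>
        have ha : hitB R x (some z) = decide (R x z) := rfl
        by_cases hz : R x z
        · rw [ha, decide_eq_true hz]
          simp [uVec, vVec, hz]
        · rw [ha, decide_eq_false hz, Fmat_some_some]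
          have hne : z ≠ y' := fun h => hz (h ▸ hy)
          rw [if_neg hne]
          simp [uVec, vVec, hz, hy]
          ring
    · rw [hb, decide_eq_false hy]
      simp [uVec, vVec, hy]

lemma vnorm_eq_norm {I : Type*} [Fintype I] (f : I → ℂ) :
    vnorm f = ‖(WithLp.equiv 2 (I → ℂ)).symm f‖ := by
  rw [EuclideanSpace.norm_eq]
  unfold vnorm
  simp only [WithLp.equiv_symm_apply, WithLp.ofLp_toLp]

lemma vnorm_nonneg {I : Type*} [Fintype I] (f : I → ℂ) : 0 ≤ vnorm f :=
  Real.sqrt_nonneg _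

lemma vnorm_mulVec_le {I : Type*} [Fintype I] [DecidableEq I] (A : Matrix I I ℂ)
    (ψ : I → ℂ) : vnorm (A.mulVec ψ) ≤ opNorm A * vnorm ψ := by
  rw [vnorm_eq_norm, vnorm_eq_norm]
  have := (Matrix.toEuclideanCLM (𝕜 := ℂ) A).le_opNorm ((WithLp.equiv 2 (I → ℂ)).symm ψ)
  rwa [WithLp.equiv_symm_apply, Matrix.toEuclideanCLM_toLp] at this

lemma opNorm_vecMulVec_le {I : Type*} [Fintype I] [DecidableEq I] (u v : I → ℂ) :
    opNorm (Matrix.vecMulVec u v)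
      ≤ Real.sqrt (∑ i, ‖u i‖ ^ 2) * Real.sqrt (∑ i, ‖v i‖ ^ 2) := by
  unfold opNorm
  refine ContinuousLinearMap.opNorm_le_bound _
    (mul_nonneg (Real.sqrt_nonneg _) (Real.sqrt_nonneg _)) fun ψ => ?_
  set f : I → ℂ := WithLp.equiv 2 (I → ℂ) ψ with hf
  have hψ : ψ = (WithLp.equiv 2 (I → ℂ)).symm f := rfl
  rw [hψ, WithLp.equiv_symm_apply, Matrix.toEuclideanCLM_toLp, ← WithLp.equiv_symm_apply]
  set s : ℂ := ∑ j, v j * f j with hs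
  have hmv : (Matrix.vecMulVec u v).mulVec f = fun i => u i * s := by
    funext i
    rw [Matrix.mulVec, dotProduct, hs, Finset.mul_sum]
    refine Finset.sum_congr rfl fun j _ => ?_
    rw [Matrix.vecMulVec_apply]; ring
  rw [hmv, ← vnorm_eq_norm]
  have hnorm : vnorm (fun i => u i * s)
      = Real.sqrt (∑ i, ‖u i‖ ^ 2) * ‖s‖ := by
    unfold vnorm
    rw [← Real.sqrt_sq (norm_nonneg s), ← Real.sqrt_mul (by positivity)]
    congr 1
    rw [Finset.sum_mul]
    refine Finset.sum_congr rfl fun i _ => ?_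
    rw [norm_mul]; ring
  rw [hnorm]
  have hCS : ‖s‖ ≤ Real.sqrt (∑ i, ‖v i‖ ^ 2) * ‖ψ‖ := by
    have hinner : (inner ℂ ((WithLp.equiv 2 (I → ℂ)).symm (star v)) ψ : ℂ) = s := by
      rw [hs]
      rw [PiLp.inner_apply]
      refine Finset.sum_congr rfl fun j _ => ?_
      simp [RCLike.inner_apply, hf, WithLp.equiv_symm_apply, mul_comm]
    have := norm_inner_le_norm (𝕜 := ℂ) ((WithLp.equiv 2 (I → ℂ)).symm (star v)) ψ
    rw [hinner] at this
    refine le_trans this ?_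
    have : ‖(WithLp.equiv 2 (I → ℂ)).symm (star v)‖ = Real.sqrt (∑ i, ‖v i‖ ^ 2) := by
      rw [← vnorm_eq_norm]
      unfold vnorm
      congr 1
      refine Finset.sum_congr rfl fun i _ => ?_
      simp [Pi.star_apply]
    rw [this]
  calc Real.sqrt (∑ i, ‖u i‖ ^ 2) * ‖s‖
      ≤ Real.sqrt (∑ i, ‖u i‖ ^ 2)
        * (Real.sqrt (∑ i, ‖v i‖ ^ 2) * ‖ψ‖) := by
        exact mul_le_mul_of_nonneg_left hCS (Real.sqrt_nonneg _)
  _ = Real.sqrt (∑ i, ‖u i‖ ^ 2) * Real.sqrt (∑ i, ‖v i‖ ^ 2) * ‖ψ‖ := by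
        ring

end Aux14

-- STATEMENT 14
theorem stmt14 (n : ℕ) {X : Type*} [Fintype X] [Nonempty X]
    (R : X → Yb n → Prop) [∀ x, DecidablePred (R x)] (x : X) :
    opNorm (((1 : Matrix (Ybar n) (Ybar n) ℂ) - Pix R x) * Fmat n * Pix R x) ≤
        (2 : ℝ) ^ (-(n : ℝ) / 2) * Real.sqrt (2 * (Gam R x : ℝ)) ∧
      ∀ ψ : Ybar n → ℂ, (∑ a, ‖ψ a‖ ^ 2 = 1) → (Pix R x).mulVec ψ = ψ →
        vnorm ((((1 : Matrix (Ybar n) (Ybar n) ℂ) - Pix R x) * Fmat n).mulVec ψ) ^ 2 ≤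
          2 * (Gam R x : ℝ) / 2 ^ n := by
  classical
  have hM := Aux14.M_eq R x
  have hc0 : 0 < cst n := Aux14.cst_pos
  have habs_u : ∀ z : Yb n,
      ‖Aux14.uVec R x (some z)‖ ^ 2 = if R x z then 0 else cst n ^ 2 := by
    intro z
    by_cases h : R x z <;> simp [Aux14.uVec, h, abs_of_pos hc0]
  have hSu : (∑ a, ‖Aux14.uVec R x a‖ ^ 2) ≤ 2 := by
    rw [Fintype.sum_option]
    have h0 : ‖Aux14.uVec R x none‖ ^ 2 = 1 := by simp [Aux14.uVec]
    have hsum : (∑ z : Yb n, ‖Aux14.uVec R x (some z)‖ ^ 2) ≤ 1 := by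
      calc (∑ z : Yb n, ‖Aux14.uVec R x (some z)‖ ^ 2)
          ≤ ∑ _z : Yb n, cst n ^ 2 := by
            refine Finset.sum_le_sum fun z _ => ?_
            rw [habs_u z]
            by_cases h : R x z
            · rw [if_pos h]; positivity
            · rw [if_neg h]
      _ = 1 := by
            rw [Finset.sum_const, Finset.card_univ, nsmul_eq_mul]
            have hcard : (Fintype.card (Yb n) : ℝ) = 2 ^ n := by
              rw [Fintype.card_fun]
              simp
            rw [hcard, mul_comm]
            exact Aux14.cst_sq_mul
    rw [h0]
    linarith
  have hSv : (∑ a, ‖Aux14.vVec R x a‖ ^ 2) = cst n ^ 2 * (Gam R x : ℝ) := by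
    rw [Fintype.sum_option]
    have h0 : ‖Aux14.vVec R x none‖ ^ 2 = 0 := by simp [Aux14.vVec]
    have habs_v : ∀ y : Yb n,
        ‖Aux14.vVec R x (some y)‖ ^ 2
          = cst n ^ 2 * (if R x y then (1:ℝ) else 0) := by
      intro y
      by_cases h : R x y <;> simp [Aux14.vVec, h, abs_of_pos hc0]
    rw [h0, zero_add, Finset.sum_congr rfl fun y _ => habs_v y, ← Finset.mul_sum,
      Finset.sum_boole, Gam]
  have hbound : opNorm (((1 : Matrix (Ybar n) (Ybar n) ℂ) - Pix R x) * Fmat n * Pix R x)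
      ≤ cst n * Real.sqrt (2 * (Gam R x : ℝ)) := by
    rw [hM]
    refine le_trans (Aux14.opNorm_vecMulVec_le _ _) ?_
    rw [hSv]
    have h1 : Real.sqrt (∑ a, ‖Aux14.uVec R x a‖ ^ 2) ≤ Real.sqrt 2 :=
      Real.sqrt_le_sqrt hSu
    have h2 : Real.sqrt (cst n ^ 2 * (Gam R x : ℝ)) = cst n * Real.sqrt (Gam R x : ℝ) := by
      rw [Real.sqrt_mul (sq_nonneg _), Real.sqrt_sq hc0.le]
    rw [h2]
    calc Real.sqrt (∑ a, ‖Aux14.uVec R x a‖ ^ 2)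
          * (cst n * Real.sqrt (Gam R x : ℝ))
        ≤ Real.sqrt 2 * (cst n * Real.sqrt (Gam R x : ℝ)) := by
          exact mul_le_mul_of_nonneg_right h1 (by positivity)
      _ = cst n * Real.sqrt (2 * (Gam R x : ℝ)) := by
          rw [Real.sqrt_mul (by norm_num : (0:ℝ) ≤ 2)]; ring
  have hcst : (2 : ℝ) ^ (-(n : ℝ) / 2) = cst n := rfl
  refine ⟨by rw [hcst]; exact hbound, fun ψ h1 h2 => ?_⟩
  have e : (((1 : Matrix (Ybar n) (Ybar n) ℂ) - Pix R x) * Fmat n).mulVec ψ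
      = ((((1 : Matrix (Ybar n) (Ybar n) ℂ) - Pix R x) * Fmat n) * Pix R x).mulVec ψ := by
    conv_lhs => rw [← h2]
    rw [Matrix.mulVec_mulVec]
  have hψn : vnorm ψ = 1 := by unfold vnorm; rw [h1, Real.sqrt_one]
  have hle : vnorm ((((1 : Matrix (Ybar n) (Ybar n) ℂ) - Pix R x) * Fmat n).mulVec ψ)
      ≤ cst n * Real.sqrt (2 * (Gam R x : ℝ)) := by
    rw [e]
    refine le_trans (Aux14.vnorm_mulVec_le _ _) ?_
    rw [hψn, mul_one]
    exact hbound
  have hsq := pow_le_pow_left₀ (Aux14.vnorm_nonneg _) hle 2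
  refine le_trans hsq ?_
  rw [mul_pow, Real.sq_sqrt (by positivity), Aux14.cst_sq]
  rw [Real.rpow_neg (by norm_num), Real.rpow_natCast]
  rw [div_eq_mul_inv]
  exact le_of_eq (by ring)

end
end
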